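/- arXiv:1911.03577 — 8 statements merged into one kernel-verified Lean document; each statement's English description precedes it below -/
import Mathlib

section
/- Let Γ be a real n × P matrix and let D be a symmetric positive semidefinite P × P matrix such that M := ΓᵀΓ + D is invertible. Then 0 ≤ tr(Γ M^{-1} Γᵀ) ≤ rank(Γ) ≤ P. (This is the matrix content of the paper's Corollary: the degrees of freedom div μ̂(ȳ) = tr(Γ M^{-1} Γᵀ) of the Blasso, where D = blockdiag(0_{k×k}, diag(Q_1,…,Q_k)) is the curvature matrix and P = (d+1)k, is sandwiched between 0 and the rank of Γ, hence at most the number (d+1)k of recovered parameters.) -/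
open Matrix
open scoped MatrixOrder

section Aux

variable {P : ℕ}

/-- Trace of a real symmetric matrix equals the sum of its eigenvalues. -/
lemma trace_eq_sum_eigenvalues_aux {S : Matrix (Fin P) (Fin P) ℝ}
    (hS : S.IsHermitian) : S.trace = ∑ i, hS.eigenvalues i := by
  rw [hS.trace_eq_sum_eigenvalues]
  simp

/-- Eigenvalues of a real symmetric matrix `S` with `1 - S` PSD are at most 1. -/
lemma eigenvalues_le_one_aux {S : Matrix (Fin P) (Fin P) ℝ}
    (hS : S.IsHermitian) (h1S : (1 - S).PosSemidef) (i : Fin P) :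
    hS.eigenvalues i ≤ 1 := by
  set v : Fin P → ℝ := ⇑(hS.eigenvectorBasis i) with hv
  have hvnorm : ‖hS.eigenvectorBasis i‖ = 1 := hS.eigenvectorBasis.orthonormal.1 i
  have hvv : dotProduct v v = 1 := by
    have h := real_inner_self_eq_norm_sq (hS.eigenvectorBasis i)
    rw [hvnorm] at h
    simp only [one_pow] at h
    rw [← h, EuclideanSpace.inner_eq_star_dotProduct]
    simp [dotProduct, hv, mul_comm]
  have hmv : S *ᵥ v = hS.eigenvalues i • v := hS.mulVec_eigenvectorBasis i
  have h0 := h1S.dotProduct_mulVec_nonneg v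
  rw [Matrix.sub_mulVec, Matrix.one_mulVec, dotProduct_sub, hmv, dotProduct_smul] at h0
  simp only [star_trivial, smul_eq_mul, hvv, mul_one] at h0
  linarith

end Aux

/-- Let `Γ` be a real `n × P` matrix and `D` a symmetric positive
semidefinite `P × P` matrix such that `M = Γᵀ Γ + D` is invertible. Then
`0 ≤ tr (Γ M⁻¹ Γᵀ) ≤ rank Γ ≤ P`. -/
theorem blasso_dof_trace_bounds {n P : ℕ}
    (Γ : Matrix (Fin n) (Fin P) ℝ)
    (D : Matrix (Fin P) (Fin P) ℝ) (hD : D.PosSemidef)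
    (M : Matrix (Fin P) (Fin P) ℝ) (hM : M = Γᵀ * Γ + D)
    (hMinv : IsUnit M.det) :
    0 ≤ (Γ * M⁻¹ * Γᵀ).trace ∧
      (Γ * M⁻¹ * Γᵀ).trace ≤ (Γ.rank : ℝ) ∧
      Γ.rank ≤ P := by
  have hT : ∀ (m k : ℕ) (A : Matrix (Fin m) (Fin k) ℝ), Aᴴ = Aᵀ := by
    intro m k A; ext i j; simp [conjTranspose_apply]
  -- Γᵀ Γ is PSD
  have hΓΓ : (Γᵀ * Γ).PosSemidef := by
    have := posSemidef_conjTranspose_mul_self Γ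
    rwa [hT] at this
  -- M is PSD, and PosDef since invertible
  have hMpsd : M.PosSemidef := hM ▸ hΓΓ.add hD
  have hMpd : M.PosDef := by
    refine PosDef.of_dotProduct_mulVec_pos hMpsd.1 fun x hx => ?_
    rcases lt_or_eq_of_le (hMpsd.dotProduct_mulVec_nonneg x) with h | h
    · exact h
    · exfalso
      have hMx : M *ᵥ x = 0 := (hMpsd.dotProduct_mulVec_zero_iff x).mp h.symm
      have : x = 0 := by
        have := congrArg (fun y => M⁻¹ *ᵥ y) hMx
        simpa [Matrix.mulVec_mulVec, Matrix.nonsing_inv_mul M hMinv] using this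
      exact hx this
  have hMinvPD : M⁻¹.PosDef := hMpd.inv
  -- square root L of M⁻¹
  set L : Matrix (Fin P) (Fin P) ℝ := CFC.sqrt M⁻¹ with hLdef
  have hLL : L * L = M⁻¹ := CFC.sqrt_mul_sqrt_self M⁻¹ (nonneg_iff_posSemidef.mpr hMinvPD.posSemidef)
  have hLherm : L.IsHermitian := (nonneg_iff_posSemidef.mp (CFC.sqrt_nonneg M⁻¹)).1
  have hLT : Lᵀ = L := by rw [← hT P P L]; exact hLherm
  -- L commutes with M
  have hcomm : L * M = M * L := by
    have h1 : L * M⁻¹ = M⁻¹ * L := by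
      rw [← hLL, Matrix.mul_assoc]
    calc L * M = (M * M⁻¹) * (L * M) := by
          rw [Matrix.mul_nonsing_inv M hMinv, Matrix.one_mul]
      _ = M * (M⁻¹ * L) * M := by simp only [Matrix.mul_assoc]
      _ = M * (L * M⁻¹) * M := by rw [h1]
      _ = (M * L) * (M⁻¹ * M) := by simp only [Matrix.mul_assoc]
      _ = M * L := by rw [Matrix.nonsing_inv_mul M hMinv, Matrix.mul_one]
  have hLML : L * M * L = 1 := by
    rw [hcomm, Matrix.mul_assoc, hLL, Matrix.mul_nonsing_inv M hMinv]
  -- the key matrix S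
  set C : Matrix (Fin n) (Fin P) ℝ := Γ * L with hCdef
  set S : Matrix (Fin P) (Fin P) ℝ := Cᵀ * C with hSdef
  have hSpsd : S.PosSemidef := by
    have := posSemidef_conjTranspose_mul_self C
    rwa [hT] at this
  have hS1 : S = L * (Γᵀ * Γ) * L := by
    rw [hSdef, hCdef, Matrix.transpose_mul, hLT]
    simp only [Matrix.mul_assoc]
  have hS2 : S = 1 - L * D * L := by
    have hΓΓD : Γᵀ * Γ = M - D := by rw [hM]; exact (add_sub_cancel_right _ _).symm
    rw [hS1, hΓΓD, Matrix.mul_sub, Matrix.sub_mul, hLML]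
  have h1S : (1 - S).PosSemidef := by
    rw [hS2]
    simp only [sub_sub_cancel]
    have := hD.conjTranspose_mul_mul_same L
    rwa [hT, hLT] at this
  -- trace identity
  have htr : (Γ * M⁻¹ * Γᵀ).trace = S.trace := by
    rw [hSdef, hCdef, Matrix.transpose_mul, hLT, ← hLL]
    rw [show Γ * (L * L) * Γᵀ = (Γ * L) * (L * Γᵀ) by simp only [Matrix.mul_assoc],
      Matrix.trace_mul_comm, Matrix.mul_assoc]
  -- trace = sum of eigenvalues
  have htr2 : S.trace = ∑ i, hSpsd.1.eigenvalues i := trace_eq_sum_eigenvalues_aux hSpsd.1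
  have hev0 : ∀ i, 0 ≤ hSpsd.1.eigenvalues i := hSpsd.eigenvalues_nonneg
  have hev1 : ∀ i, hSpsd.1.eigenvalues i ≤ 1 := eigenvalues_le_one_aux hSpsd.1 h1S
  -- rank S = rank Γ
  have hLdet : IsUnit L.det := by
    have : IsUnit (L.det * L.det) := by
      rw [← Matrix.det_mul, hLL]
      exact Matrix.isUnit_nonsing_inv_det M hMinv
    exact isUnit_of_mul_isUnit_left this
  have hrank : S.rank = Γ.rank := by
    rw [hSdef, Matrix.rank_transpose_mul_self, hCdef,
      Matrix.rank_mul_eq_left_of_isUnit_det L Γ hLdet]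
  -- rank S = number of nonzero eigenvalues
  have hrankcard : S.rank = (Finset.univ.filter fun i => hSpsd.1.eigenvalues i ≠ 0).card := by
    rw [hSpsd.1.rank_eq_card_non_zero_eigs, Fintype.card_subtype]
  refine ⟨?_, ?_, ?_⟩
  · rw [htr, htr2]
    exact Finset.sum_nonneg fun i _ => hev0 i
  · rw [htr, htr2, ← hrank, hrankcard]
    have hsum : ∑ i, hSpsd.1.eigenvalues i
        = ∑ i ∈ Finset.univ.filter (fun i => hSpsd.1.eigenvalues i ≠ 0),
          hSpsd.1.eigenvalues i := by
      exact (Finset.sum_filter_of_ne fun i _ h => h).symm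
    rw [hsum]
    calc ∑ i ∈ Finset.univ.filter (fun i => hSpsd.1.eigenvalues i ≠ 0), hSpsd.1.eigenvalues i
        ≤ ∑ _i ∈ Finset.univ.filter (fun i => hSpsd.1.eigenvalues i ≠ 0), (1 : ℝ) :=
          Finset.sum_le_sum fun i _ => hev1 i
      _ = ((Finset.univ.filter fun i => hSpsd.1.eigenvalues i ≠ 0).card : ℝ) := by simp
  · exact Matrix.rank_le_width Γ
end

section
/- Let k ≥ 1 and d ≥ 1, set P := (d+1)k, let Γ be a real n × P matrix with trivial kernel (so rank(Γ) = P), let Q be a symmetric positive definite kd × kd matrix, set D := blockdiag(0_{k×k}, Q), and assume M := ΓᵀΓ + D is invertible. Then tr(Γ M^{-1} Γᵀ) < P. (This is the strict part of the paper's Corollary: when Γ_{X̄} is injective and the Hessians ∇²η_ȳ(x̄_j) are invertible, the degrees of freedom of the Blasso is strictly smaller than the number P = (d+1)k of recovered parameters.) -/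
open Matrix


lemma aux_posDef_transpose_mul_self {m p : Type*} [Fintype m] [Fintype p] [DecidableEq p]
    (A : Matrix m p ℝ) (h : ∀ v : p → ℝ, A.mulVec v = 0 → v = 0) : (Aᵀ * A).PosDef := by
  have hT : Aᵀ = Aᴴ := by ext i j; simp [conjTranspose_apply]
  rw [hT]
  refine posDef_iff_dotProduct_mulVec.mpr ⟨isHermitian_conjTranspose_mul_self A, fun x hx => ?_⟩
  rw [← mulVec_mulVec, dotProduct_mulVec, vecMul_conjTranspose, star_star]
  exact dotProduct_star_self_pos_iff.mpr (fun h0 => hx (h x h0))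

lemma aux_psd_fromBlocks {a b : Type*} [Fintype a] [Fintype b] [DecidableEq a] [DecidableEq b]
    {Q : Matrix b b ℝ} (hQ : Q.PosSemidef) :
    (Matrix.fromBlocks (0 : Matrix a a ℝ) 0 0 Q).PosSemidef := by
  rw [posSemidef_iff_dotProduct_mulVec]
  constructor
  · have := hQ.1
    unfold IsHermitian at *
    ext (i|i) (j|j) <;> simp [conjTranspose_apply, fromBlocks] <;>
      simpa [conjTranspose_apply] using (congrFun (congrFun this i) j)
  · intro x
    have : star x ⬝ᵥ (fromBlocks (0 : Matrix a a ℝ) 0 0 Q).mulVec x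
        = star (x ∘ Sum.inr) ⬝ᵥ Q.mulVec (x ∘ Sum.inr) := by
      rw [← Sum.elim_comp_inl_inr x, fromBlocks_mulVec]
      simp [dotProduct, Fintype.sum_sum_type]
    rw [this]
    exact hQ.dotProduct_mulVec_nonneg _

/-- Let `k ≥ 1`, `d ≥ 1`, `P = (d+1)k`, let `Γ` be a real `n × P` matrix
with trivial kernel, `Q` a symmetric positive definite `kd × kd` matrix,
`D = blockdiag(0_{k×k}, Q)`, and assume `M = Γᵀ Γ + D` is invertible.
Then `tr (Γ M⁻¹ Γᵀ) < P = (d+1)k`. -/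
theorem blasso_dof_strictly_less_than_params {n k d : ℕ} (hk : 1 ≤ k) (hd : 1 ≤ d)
    (Γ : Matrix (Fin n) (Fin k ⊕ Fin (k * d)) ℝ)
    (hΓ : ∀ v : Fin k ⊕ Fin (k * d) → ℝ, Γ.mulVec v = 0 → v = 0)
    (Q : Matrix (Fin (k * d)) (Fin (k * d)) ℝ) (hQ : Q.PosDef)
    (M : Matrix (Fin k ⊕ Fin (k * d)) (Fin k ⊕ Fin (k * d)) ℝ)
    (hM : M = Γᵀ * Γ + Matrix.fromBlocks 0 0 0 Q)
    (hMinv : IsUnit M.det) :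
    (Γ * M⁻¹ * Γᵀ).trace < ((d + 1) * k : ℝ) := by
  set D : Matrix (Fin k ⊕ Fin (k * d)) (Fin k ⊕ Fin (k * d)) ℝ := fromBlocks 0 0 0 Q with hD
  have hDpsd : D.PosSemidef := aux_psd_fromBlocks hQ.posSemidef
  have hMpd : M.PosDef := by
    rw [hM]; exact (aux_posDef_transpose_mul_self Γ hΓ).add_posSemidef hDpsd
  have hMipd : M⁻¹.PosDef := hMpd.inv
  -- trace identity
  have hGG : Γᵀ * Γ = M - D := by rw [hM]; abel
  have h1 : (Γ * M⁻¹ * Γᵀ).trace = ((d + 1) * k : ℝ) - (M⁻¹ * D).trace := by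
    have : (Γ * M⁻¹ * Γᵀ).trace = (M⁻¹ * (Γᵀ * Γ)).trace := by
      rw [Matrix.mul_assoc, trace_mul_comm, Matrix.mul_assoc]
    rw [this, hGG, Matrix.mul_sub, trace_sub, Matrix.nonsing_inv_mul M hMinv, trace_one]
    congr 1
    simp [Fintype.card_sum]
    push_cast
    ring
  rw [h1]
  have hpos : 0 < (M⁻¹ * D).trace := by
    -- square root of D
    obtain ⟨S, hSS, hSherm⟩ : ∃ S : Matrix (Fin k ⊕ Fin (k * d)) (Fin k ⊕ Fin (k * d)) ℝ,
        S * S = D ∧ S.IsHermitian := by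
      open scoped MatrixOrder in
      exact ⟨CFC.sqrt D, CFC.sqrt_mul_sqrt_self D hDpsd.nonneg, (CFC.sqrt_nonneg D).posSemidef.1⟩
    have htr : (M⁻¹ * D).trace = (S * M⁻¹ * S).trace := by
      rw [← hSS, ← Matrix.mul_assoc, trace_mul_comm, Matrix.mul_assoc, ← Matrix.mul_assoc]
    rw [htr]
    -- diagonal entries
    have hdiag : ∀ i, (S * M⁻¹ * S) i i = (fun j => S j i) ⬝ᵥ M⁻¹.mulVec (fun j => S j i) := by
      intro i
      have hsym : ∀ a b, S a b = S b a := fun a b => by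
        have := congrFun (congrFun hSherm.eq b) a
        simpa [conjTranspose_apply] using this
      simp only [mul_apply, dotProduct, mulVec, Finset.mul_sum, Finset.sum_mul]
      rw [Finset.sum_comm]
      refine Finset.sum_congr rfl fun a _ => Finset.sum_congr rfl fun b _ => ?_
      rw [hsym i a]
      ring
    have hdiag_nonneg : ∀ i, 0 ≤ (S * M⁻¹ * S) i i := by
      intro i
      rw [hdiag i]
      have := hMipd.posSemidef.dotProduct_mulVec_nonneg (fun j => S j i)
      simpa using this
    -- S ≠ 0
    have hDne : D ≠ 0 := by
      intro h0
      have hkd : 0 < k * d := Nat.mul_pos hk hd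
      obtain ⟨i⟩ : Nonempty (Fin (k * d)) := ⟨⟨0, hkd⟩⟩
      have hQii : 0 < Q i i := by
        have := (posDef_iff_dotProduct_mulVec.mp hQ).2 (x := Pi.single i 1) (by simp [Function.ne_iff])
        simpa [dotProduct, mulVec, Pi.single_apply] using this
      have : D (Sum.inr i) (Sum.inr i) = 0 := by rw [h0]; rfl
      rw [hD] at this
      simp [fromBlocks] at this
      rw [this] at hQii
      exact lt_irrefl _ hQii
    have hSne : S ≠ 0 := fun h0 => hDne (by rw [← hSS, h0, Matrix.mul_zero])
    obtain ⟨a, b, hab⟩ : ∃ a b, S a b ≠ 0 := by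
      by_contra hc
      push_neg at hc
      exact hSne (by ext a b; exact hc a b)
    have hbpos : 0 < (S * M⁻¹ * S) b b := by
      rw [hdiag b]
      have hvne : (fun j => S j b) ≠ 0 := by
        intro h0
        exact hab (congrFun h0 a)
      have := (posDef_iff_dotProduct_mulVec.mp hMipd).2 (x := fun j => S j b) hvne
      simpa using this
    rw [Matrix.trace]
    refine Finset.sum_pos' (fun i _ => hdiag_nonneg i) ⟨b, Finset.mem_univ b, hbpos⟩
  linarith
end

section
/- Let X ∈ ℝ^{n×p}, y ∈ ℝ^n, λ > 0, and suppose β̂ ∈ ℝ^p minimizes G(β) := (1/2)‖Xβ − y‖₂² + λ‖β‖₁ over ℝ^p. Then there exists a minimizer β' of G with supp(β') ⊆ supp(β̂) such that the columns of X indexed by supp(β') are linearly independent. (This is the finite-support form of the paper's Lemma 4.1: when the extended support of the Blasso is discrete, there exists a Blasso solution supported on a subset A of the extended support such that Φ_A is injective.) -/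
open Matrix

/-- Key step: if `β` is a minimizer and `c` is a nonzero kernel direction supported on
`supp β`, then we can find a minimizer with strictly smaller support. -/
lemma lasso_step {n p : ℕ}
    (X : Matrix (Fin n) (Fin p) ℝ) (y : Fin n → ℝ) (lam : ℝ) (hlam : 0 < lam)
    (G : (Fin p → ℝ) → ℝ)
    (hG : G = fun β => (1 / 2) * ∑ i, (X.mulVec β i - y i) ^ 2 + lam * ∑ j, |β j|)
    (β : Fin p → ℝ) (hβ : ∀ γ, G β ≤ G γ)
    (c : Fin p → ℝ) (hXc : X.mulVec c = 0)
    (hsc : ∀ j, c j ≠ 0 → β j ≠ 0) (j0 : Fin p) (hj0 : c j0 ≠ 0) :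
    ∃ β', (∀ γ, G β' ≤ G γ) ∧ (∀ j, β' j ≠ 0 → β j ≠ 0) ∧
      (Finset.univ.filter (fun j => β' j ≠ 0)).card <
        (Finset.univ.filter (fun j => β j ≠ 0)).card := by
  classical
  set s := Finset.univ.filter (fun j => c j ≠ 0) with hsdef
  have hs : s.Nonempty := ⟨j0, by simp [hsdef, hj0]⟩
  obtain ⟨j1, hj1s, hj1min⟩ := s.exists_min_image (fun j => |β j| / |c j|) hs
  have hcj1 : c j1 ≠ 0 := by simpa [hsdef] using hj1s
  have hβj1 : β j1 ≠ 0 := hsc j1 hcj1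
  set T := |β j1| / |c j1| with hT
  have hT0 : 0 < T := div_pos (abs_pos.2 hβj1) (abs_pos.2 hcj1)
  set sg : Fin p → ℝ := fun j => if 0 ≤ β j then 1 else -1 with hsg
  have habs : ∀ t : ℝ, |t| ≤ T → ∀ j, |β j + t * c j| = sg j * (β j + t * c j) := by
    intro t ht j
    by_cases hcj : c j = 0
    · rcases le_or_gt 0 (β j) with h | h
      · simp [hcj, hsg, h, abs_of_nonneg h]
      · simp [hcj, hsg, not_le.2 h, abs_of_neg h]
    · have hTle : T ≤ |β j| / |c j| := hj1min j (by simp [hsdef, hcj])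
      have h1 : |t * c j| ≤ |β j| := by
        rw [abs_mul]
        calc |t| * |c j| ≤ T * |c j| := by gcongr
          _ ≤ (|β j| / |c j|) * |c j| := by gcongr
          _ = |β j| := div_mul_cancel₀ _ (abs_ne_zero.2 hcj)
      rcases le_or_gt 0 (β j) with h | h
      · have hnn : 0 ≤ β j + t * c j := by
          have h2 := neg_abs_le (t * c j)
          have h3 : |β j| = β j := abs_of_nonneg h
          linarith
        simp [hsg, h, abs_of_nonneg hnn]
      · have hnp : β j + t * c j ≤ 0 := by
          have h2 := le_abs_self (t * c j)
          have h3 : |β j| = -β j := abs_of_neg h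
          linarith
        rw [abs_of_nonpos hnp]
        simp only [hsg]
        rw [if_neg (not_le.2 h)]
        ring
  have hQ : ∀ t : ℝ, X.mulVec (β + t • c) = X.mulVec β := by
    intro t
    rw [mulVec_add, mulVec_smul, hXc]
    simp
  set L := ∑ j, sg j * c j with hLdef
  have hGt : ∀ t : ℝ, |t| ≤ T → G (β + t • c) = G β + lam * (t * L) := by
    intro t ht
    have hsum : ∑ j, |(β + t • c) j| = (∑ j, |β j|) + t * L := by
      have e : ∀ j ∈ Finset.univ, |(β + t • c) j| = sg j * β j + t * (sg j * c j) := by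
        intro j _
        have h := habs t ht j
        simp only [Pi.add_apply, Pi.smul_apply, smul_eq_mul]
        rw [h]; ring
      rw [Finset.sum_congr rfl e, Finset.sum_add_distrib, ← Finset.mul_sum]
      congr 1
      refine Finset.sum_congr rfl fun j _ => ?_
      have h0 := habs 0 (by simpa using le_of_lt hT0) j
      simpa using h0.symm
    rw [hG]
    simp only [hQ t, hsum]
    ring
  have hL : L = 0 := by
    have h1 := hβ (β + T • c)
    have h2 := hβ (β + (-T) • c)
    rw [hGt T (by rw [abs_of_pos hT0])] at h1
    rw [hGt (-T) (by rw [abs_neg, abs_of_pos hT0])] at h2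
    have hL1 : 0 ≤ L := by nlinarith [mul_pos hlam hT0]
    have hL2 : L ≤ 0 := by nlinarith [mul_pos hlam hT0]
    linarith
  set t0 := -(β j1) / (c j1) with ht0def
  have ht0 : |t0| = T := by rw [ht0def, abs_div, abs_neg]
  have hmin' : ∀ γ, G (β + t0 • c) ≤ G γ := by
    intro γ
    rw [hGt t0 (le_of_eq ht0), hL]
    simpa using hβ γ
  have hzero : (β + t0 • c) j1 = 0 := by
    simp only [Pi.add_apply, Pi.smul_apply, smul_eq_mul, ht0def]
    field_simp
    ring
  have hsupp : ∀ j, (β + t0 • c) j ≠ 0 → β j ≠ 0 := by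
    intro j hj hbj
    have hcj : c j = 0 := by
      by_contra hc
      exact hsc j hc hbj
    apply hj
    simp [hbj, hcj]
  refine ⟨β + t0 • c, hmin', hsupp, ?_⟩
  apply Finset.card_lt_card
  constructor
  · intro j hj
    simp only [Finset.mem_filter, Finset.mem_univ, true_and] at hj ⊢
    exact hsupp j hj
  · intro hsub
    have hj1mem : j1 ∈ Finset.univ.filter (fun j => β j ≠ 0) := by
      simp [hβj1]
    have := hsub hj1mem
    simp only [Finset.mem_filter, Finset.mem_univ, true_and] at this
    exact this hzero

/-- If `β̂` minimizes the Lasso functional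
`G(β) = (1/2)‖Xβ − y‖₂² + λ‖β‖₁`, then there exists a minimizer `β'` of `G` with
`supp β' ⊆ supp β̂` such that the columns of `X` indexed by `supp β'` are linearly
independent. -/
theorem lasso_solution_with_independent_columns {n p : ℕ}
    (X : Matrix (Fin n) (Fin p) ℝ) (y : Fin n → ℝ) (lam : ℝ) (hlam : 0 < lam)
    (G : (Fin p → ℝ) → ℝ)
    (hG : G = fun β => (1 / 2) * ∑ i, (X.mulVec β i - y i) ^ 2 + lam * ∑ j, |β j|)
    (βhat : Fin p → ℝ) (hmin : ∀ γ, G βhat ≤ G γ) :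
    ∃ β' : Fin p → ℝ, (∀ γ, G β' ≤ G γ) ∧ (∀ j, β' j ≠ 0 → βhat j ≠ 0) ∧
      LinearIndependent ℝ (fun j : {j : Fin p // β' j ≠ 0} => fun i => X i j.1) := by
  classical
  suffices H : ∀ k (β : Fin p → ℝ), (Finset.univ.filter (fun j => β j ≠ 0)).card ≤ k →
      (∀ γ, G β ≤ G γ) → ∃ β', (∀ γ, G β' ≤ G γ) ∧ (∀ j, β' j ≠ 0 → β j ≠ 0) ∧
        LinearIndependent ℝ (fun j : {j : Fin p // β' j ≠ 0} => fun i => X i j.1) by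
    exact H _ βhat le_rfl hmin
  intro k
  induction k with
  | zero =>
    intro β hcard hβ
    have hemp : Finset.univ.filter (fun j => β j ≠ 0) = ∅ :=
      Finset.card_eq_zero.mp (Nat.le_zero.mp hcard)
    have hz : ∀ j, β j = 0 := by
      intro j
      by_contra h
      have : j ∈ Finset.univ.filter (fun j => β j ≠ 0) := by simp [h]
      simp [hemp] at this
    have hIE : IsEmpty {j : Fin p // β j ≠ 0} := ⟨fun x => x.2 (hz x.1)⟩
    exact ⟨β, hβ, fun j h => h, linearIndependent_empty_type⟩
  | succ k ih =>
    intro β hcard hβ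
    by_cases hLI : LinearIndependent ℝ (fun j : {j : Fin p // β j ≠ 0} => fun i => X i j.1)
    · exact ⟨β, hβ, fun j h => h, hLI⟩
    · rw [Fintype.not_linearIndependent_iff] at hLI
      obtain ⟨g, hg, j0, hgj0⟩ := hLI
      set c : Fin p → ℝ := fun j => if h : β j ≠ 0 then g ⟨j, h⟩ else 0 with hc
      have hsc : ∀ j, c j ≠ 0 → β j ≠ 0 := by
        intro j hj
        by_contra h
        simp [hc, h] at hj
      have hcj0 : c j0.1 ≠ 0 := by
        have : c j0.1 = g j0 := by simp [hc, j0.2]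
        rw [this]; exact hgj0
      have hXc : X.mulVec c = 0 := by
        funext i
        have hgi := congrFun hg i
        simp only [Finset.sum_apply, Pi.smul_apply, smul_eq_mul, Pi.zero_apply] at hgi
        have e1 : X.mulVec c i = ∑ j, X i j * c j := by
          simp [mulVec, dotProduct]
        have e2 : ∑ j, X i j * c j
            = ∑ j ∈ Finset.univ.filter (fun j => β j ≠ 0), X i j * c j := by
          symm
          apply Finset.sum_filter_of_ne
          intro j _ hne hbj
          apply hne
          simp [hc, hbj]
        have e3 : ∑ j ∈ Finset.univ.filter (fun j => β j ≠ 0), X i j * c j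
            = ∑ j : {j : Fin p // β j ≠ 0}, X i j.1 * c j.1 :=
          Finset.sum_subtype _ (by simp) _
        have e4 : ∑ j : {j : Fin p // β j ≠ 0}, X i j.1 * c j.1
            = ∑ j : {j : Fin p // β j ≠ 0}, g j * X i j.1 := by
          refine Finset.sum_congr rfl fun j _ => ?_
          have : c j.1 = g j := by simp [hc, j.2]
          rw [this, mul_comm]
        rw [Pi.zero_apply, e1, e2, e3, e4, hgi]
      obtain ⟨β', h1, h2, h3⟩ := lasso_step X y lam hlam G hG β hβ c hXc hsc j0.1 hcj0
      obtain ⟨β'', k1, k2, k3⟩ := ih β' (by omega) h1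
      exact ⟨β'', k1, fun j hj => h2 j (k2 j hj), k3⟩
end

section
/- Let Ω ⊆ ℝ^d be open, φ : Ω → ℝ^n twice continuously differentiable, λ > 0, k ∈ ℕ, s ∈ {−1, +1}^k, and define F : ℝ^k × Ω^k × ℝ^n → ℝ^{k(d+1)} by F(β, X, y) := Γ_Xᵀ(Φ_X β − y) + λ(s, 0_{kd}). Suppose (β̄, X̄, ȳ) satisfies F(β̄, X̄, ȳ) = 0, the matrix Φ_{X̄} is injective, β̄_j ≠ 0 for every j, and for each j the d×d matrix (1/β̄_j) Z_j is positive definite, where Z_j := Σ_{i=1}^n (Φ_{X̄} β̄ − ȳ)_i ∇²φ_i(x̄_j). Then there exist open neighbourhoods U of ȳ and V of (β̄, X̄) and a continuously differentiable map g : U → V such that g(ȳ) = (β̄, X̄), F(g(y), y) = 0 for every y ∈ U, and for each y ∈ U, g(y) is the unique point (β, X) ∈ V with F(β, X, y) = 0. (This is the C¹ solution-path construction in the proof of Theorem 4.2.) -/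
open Matrix

lemma euclid_eq_sum_single {d : ℕ} (v : EuclideanSpace ℝ (Fin d)) :
    v = ∑ r, v r • EuclideanSpace.single r 1 := by
  ext t
  rw [WithLp.ofLp_sum, Finset.sum_apply]
  simp [EuclideanSpace.single_apply, mul_ite, Finset.sum_ite_eq']

lemma clm_euclid_expand {d : ℕ} {M : Type*} [NormedAddCommGroup M] [NormedSpace ℝ M]
    (L : EuclideanSpace ℝ (Fin d) →L[ℝ] M) (v : EuclideanSpace ℝ (Fin d)) :
    L v = ∑ r, v r • L (EuclideanSpace.single r 1) := by
  conv_lhs => rw [euclid_eq_sum_single v]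
  rw [map_sum]
  simp

lemma clm_euclid_expand_real {d : ℕ}
    (L : EuclideanSpace ℝ (Fin d) →L[ℝ] ℝ) (v : EuclideanSpace ℝ (Fin d)) :
    L v = ∑ r, v r * L (EuclideanSpace.single r 1) := by
  simpa [smul_eq_mul] using clm_euclid_expand L v

section
open ContinuousLinearMap
variable {d n k : ℕ}

local notation "Ed" => EuclideanSpace ℝ (Fin d)
local notation "Yt" => EuclideanSpace ℝ (Fin n)
local notation "Et" => (Fin k → ℝ) × (Fin k → EuclideanSpace ℝ (Fin d))
local notation "Pt" => ((Fin k → ℝ) × (Fin k → EuclideanSpace ℝ (Fin d))) × EuclideanSpace ℝ (Fin n)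

noncomputable def pB (l : Fin k) : Pt →L[ℝ] ℝ :=
  (proj l).comp ((fst ℝ (Fin k → ℝ) (Fin k → Ed)).comp (fst ℝ Et Yt))

noncomputable def pX (l : Fin k) : Pt →L[ℝ] Ed :=
  (proj l).comp ((snd ℝ (Fin k → ℝ) (Fin k → Ed)).comp (fst ℝ Et Yt))

noncomputable def pY (i : Fin n) : Pt →L[ℝ] ℝ :=
  (EuclideanSpace.proj i).comp (snd ℝ Et Yt)

@[simp] lemma pB_apply (l : Fin k) (q : Pt) : pB (d := d) (n := n) l q = q.1.1 l := rfl
@[simp] lemma pX_apply (l : Fin k) (q : Pt) : pX (d := d) (n := n) l q = q.1.2 l := rfl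
@[simp] lemma pY_apply (i : Fin n) (q : Pt) : pY (d := d) (k := k) i q = q.2 i := rfl

variable (φ : EuclideanSpace ℝ (Fin d) → EuclideanSpace ℝ (Fin n))
  (βbar : Fin k → ℝ) (Xbar : Fin k → EuclideanSpace ℝ (Fin d))
  (ybar : EuclideanSpace ℝ (Fin n))

noncomputable def G1f (i : Fin n) (j : Fin k) : Ed →L[ℝ] ℝ :=
  fderiv ℝ (fun x => φ x i) (Xbar j)

noncomputable def G2f (i : Fin n) (j : Fin k) : Ed →L[ℝ] (Ed →L[ℝ] ℝ) :=
  fderiv ℝ (fderiv ℝ (fun x => φ x i)) (Xbar j)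

noncomputable def Rm (i : Fin n) : ℝ := (∑ l, βbar l * φ (Xbar l) i) - ybar i

noncomputable def Dres (i : Fin n) : Pt →L[ℝ] ℝ :=
  (∑ l, (βbar l • ((G1f φ Xbar i l).comp (pX l)) + (φ (Xbar l) i) • pB l)) - pY i

noncomputable def Dinl (j : Fin k) : Pt →L[ℝ] ℝ :=
  ∑ i, ((φ (Xbar j) i) • Dres φ βbar Xbar i
    + (Rm φ βbar Xbar ybar i) • ((G1f φ Xbar i j).comp (pX j)))

noncomputable def D1 (i : Fin n) (j : Fin k) (r : Fin d) : Pt →L[ℝ] ℝ :=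
  (G1f φ Xbar i j).comp (0 : Pt →L[ℝ] Ed)
    + ((G2f φ Xbar i j).comp (pX j)).flip (EuclideanSpace.single r 1)

noncomputable def Dinr (j : Fin k) (r : Fin d) : Pt →L[ℝ] ℝ :=
  ∑ i, ((G1f φ Xbar i j (EuclideanSpace.single r 1)) • Dres φ βbar Xbar i
    + (Rm φ βbar Xbar ybar i) • D1 φ Xbar i j r)

lemma Dres_apply (i : Fin n) (q : Pt) :
    Dres φ βbar Xbar i q
      = (∑ l, (q.1.1 l * φ (Xbar l) i + βbar l * (G1f φ Xbar i l) (q.1.2 l))) - q.2 i := by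
  simp only [Dres, ContinuousLinearMap.sub_apply, ContinuousLinearMap.sum_apply,
    ContinuousLinearMap.add_apply, ContinuousLinearMap.smul_apply, ContinuousLinearMap.comp_apply,
    pB_apply, pX_apply, pY_apply, smul_eq_mul]
  rw [sub_left_inj]
  exact Finset.sum_congr rfl fun l _ => by ring

lemma D1_apply (i : Fin n) (j : Fin k) (r : Fin d) (q : Pt) :
    D1 φ Xbar i j r q = (G2f φ Xbar i j) (q.1.2 j) (EuclideanSpace.single r 1) := by
  simp [D1]

lemma Dinl_apply (j : Fin k) (q : Pt) :
    Dinl φ βbar Xbar ybar j q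
      = ∑ i, (φ (Xbar j) i * (Dres φ βbar Xbar i q)
          + Rm φ βbar Xbar ybar i * (G1f φ Xbar i j) (q.1.2 j)) := by
  simp [Dinl]

lemma Dinr_apply (j : Fin k) (r : Fin d) (q : Pt) :
    Dinr φ βbar Xbar ybar j r q
      = ∑ i, ((G1f φ Xbar i j) (EuclideanSpace.single r 1) * (Dres φ βbar Xbar i q)
          + Rm φ βbar Xbar ybar i * (G2f φ Xbar i j) (q.1.2 j) (EuclideanSpace.single r 1)) := by
  simp [Dinr, D1_apply]

section deriv
variable (hφi : ∀ (i : Fin n) (l : Fin k), ContDiffAt ℝ 2 (fun x => φ x i) (Xbar l))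
include hφi

lemma hasFDerivAt_res (i : Fin n) :
    HasFDerivAt (fun p : Pt => (∑ l, p.1.1 l * φ (p.1.2 l) i) - p.2 i)
      (Dres φ βbar Xbar i) (((βbar, Xbar), ybar) : Pt) := by
  have hval : ∀ l, HasFDerivAt (fun x => φ x i) (G1f φ Xbar i l) (Xbar l) :=
    fun l => ((hφi i l).differentiableAt two_ne_zero).hasFDerivAt
  refine HasFDerivAt.sub (HasFDerivAt.fun_sum fun l _ => ?_) ((pY i).hasFDerivAt)
  exact HasFDerivAt.mul ((pB l).hasFDerivAt) ((hval l).comp (((βbar, Xbar), ybar) : Pt) ((pX l).hasFDerivAt))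

lemma hasFDerivAt_inl (lam c : ℝ) (j : Fin k) :
    HasFDerivAt (fun p : Pt =>
        (∑ i, φ (p.1.2 j) i * ((∑ l, p.1.1 l * φ (p.1.2 l) i) - p.2 i)) + lam * c)
      (Dinl φ βbar Xbar ybar j) (((βbar, Xbar), ybar) : Pt) := by
  refine HasFDerivAt.add_const _ (HasFDerivAt.fun_sum fun i _ => ?_)
  have hval : HasFDerivAt (fun x => φ x i) (G1f φ Xbar i j) (Xbar j) :=
    ((hφi i j).differentiableAt two_ne_zero).hasFDerivAt
  exact HasFDerivAt.mul (hval.comp (((βbar, Xbar), ybar) : Pt) ((pX j).hasFDerivAt)) (hasFDerivAt_res φ βbar Xbar ybar hφi i)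

lemma hasFDerivAt_inr (j : Fin k) (r : Fin d) :
    HasFDerivAt (fun p : Pt =>
        ∑ i, fderiv ℝ (fun x => φ x i) (p.1.2 j) (EuclideanSpace.single r 1)
          * ((∑ l, p.1.1 l * φ (p.1.2 l) i) - p.2 i))
      (Dinr φ βbar Xbar ybar j r) (((βbar, Xbar), ybar) : Pt) := by
  refine HasFDerivAt.fun_sum fun i _ => ?_
  have hD : HasFDerivAt (fderiv ℝ (fun x => φ x i)) (G2f φ Xbar i j) (Xbar j) :=
    (((hφi i j).fderiv_right (by norm_num)).differentiableAt one_ne_zero).hasFDerivAt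
  have hc0 : HasFDerivAt (fun p : Pt => fderiv ℝ (fun x => φ x i) (p.1.2 j))
      ((G2f φ Xbar i j).comp (pX j)) (((βbar, Xbar), ybar) : Pt) :=
    hD.comp (((βbar, Xbar), ybar) : Pt) ((pX j).hasFDerivAt)
  have hc : HasFDerivAt
      (fun p : Pt => fderiv ℝ (fun x => φ x i) (p.1.2 j) (EuclideanSpace.single r 1))
      (D1 φ Xbar i j r) (((βbar, Xbar), ybar) : Pt) :=
    hc0.clm_apply (hasFDerivAt_const _ _)
  exact HasFDerivAt.mul hc (hasFDerivAt_res φ βbar Xbar ybar hφi i)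

lemma contDiffAt_res (i : Fin n) :
    ContDiffAt ℝ 1 (fun p : Pt => (∑ l, p.1.1 l * φ (p.1.2 l) i) - p.2 i)
      (((βbar, Xbar), ybar) : Pt) := by
  refine ContDiffAt.sub (ContDiffAt.sum fun l _ => ?_) ((pY i).contDiff.contDiffAt)
  exact ContDiffAt.mul ((pB l).contDiff.contDiffAt)
    (((hφi i l).of_le one_le_two).comp (((βbar, Xbar), ybar) : Pt) ((pX l).contDiff.contDiffAt))

lemma contDiffAt_inl (lam c : ℝ) (j : Fin k) :
    ContDiffAt ℝ 1 (fun p : Pt =>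
        (∑ i, φ (p.1.2 j) i * ((∑ l, p.1.1 l * φ (p.1.2 l) i) - p.2 i)) + lam * c)
      (((βbar, Xbar), ybar) : Pt) := by
  refine ContDiffAt.add (ContDiffAt.sum fun i _ => ?_) contDiffAt_const
  exact ContDiffAt.mul (((hφi i j).of_le one_le_two).comp (((βbar, Xbar), ybar) : Pt) ((pX j).contDiff.contDiffAt))
    (contDiffAt_res φ βbar Xbar ybar hφi i)

lemma contDiffAt_inr (j : Fin k) (r : Fin d) :
    ContDiffAt ℝ 1 (fun p : Pt =>
        ∑ i, fderiv ℝ (fun x => φ x i) (p.1.2 j) (EuclideanSpace.single r 1)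
          * ((∑ l, p.1.1 l * φ (p.1.2 l) i) - p.2 i))
      (((βbar, Xbar), ybar) : Pt) := by
  refine ContDiffAt.sum fun i _ => ?_
  have hD : ContDiffAt ℝ 1 (fderiv ℝ (fun x => φ x i)) (Xbar j) :=
    (hφi i j).fderiv_right (by norm_num)
  exact ContDiffAt.mul ((hD.comp (((βbar, Xbar), ybar) : Pt) ((pX j).contDiff.contDiffAt)).clm_apply contDiffAt_const)
    (contDiffAt_res φ βbar Xbar ybar hφi i)

noncomputable def Fhat (lam : ℝ) (s : Fin k → ℝ) : Pt → ((Fin k ⊕ Fin k × Fin d) → ℝ) :=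
  fun p => Sum.elim
    (fun j => (∑ i, φ (p.1.2 j) i * ((∑ l, p.1.1 l * φ (p.1.2 l) i) - p.2 i)) + lam * s j)
    (fun jr => ∑ i, fderiv ℝ (fun x => φ x i) (p.1.2 jr.1) (EuclideanSpace.single jr.2 1)
      * ((∑ l, p.1.1 l * φ (p.1.2 l) i) - p.2 i))

noncomputable def DFf : Pt →L[ℝ] ((Fin k ⊕ Fin k × Fin d) → ℝ) :=
  ContinuousLinearMap.pi (fun c => Sum.elim
    (fun j => Dinl φ βbar Xbar ybar j) (fun jr => Dinr φ βbar Xbar ybar jr.1 jr.2) c)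

lemma hasFDerivAt_Fhat (lam : ℝ) (s : Fin k → ℝ) :
    HasFDerivAt (Fhat φ lam s) (DFf φ βbar Xbar ybar) (((βbar, Xbar), ybar) : Pt) := by
  apply hasFDerivAt_pi''
  intro c
  rw [DFf, ContinuousLinearMap.proj_pi]
  cases c with
  | inl j => exact hasFDerivAt_inl φ βbar Xbar ybar hφi lam (s j) j
  | inr jr => exact hasFDerivAt_inr φ βbar Xbar ybar hφi jr.1 jr.2

lemma contDiffAt_Fhat (lam : ℝ) (s : Fin k → ℝ) :
    ContDiffAt ℝ 1 (Fhat φ lam s) (((βbar, Xbar), ybar) : Pt) := by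
  apply contDiffAt_pi.2
  intro c
  cases c with
  | inl j => exact contDiffAt_inl φ βbar Xbar ybar hφi lam (s j) j
  | inr jr => exact contDiffAt_inr φ βbar Xbar ybar hφi jr.1 jr.2

end deriv

lemma DFf_inj
    (hinj : ∀ v : Fin k → ℝ, (fun i : Fin n => ∑ j, v j * φ (Xbar j) i) = 0 → v = 0)
    (hβ : ∀ j, βbar j ≠ 0)
    (hgrad0 : ∀ (j : Fin k) (v : Ed), ∑ i, (G1f φ Xbar i j) v * Rm φ βbar Xbar ybar i = 0)
    (hQ : ∀ (j : Fin k) (v : Ed), v ≠ 0 →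
      0 < (1 / βbar j) * ∑ i, Rm φ βbar Xbar ybar i * (G2f φ Xbar i j) v v)
    (u : Pt) (hu2 : u.2 = 0) (hu : DFf φ βbar Xbar ybar u = 0) : u = 0 := by
  obtain ⟨⟨dβ, dX⟩, dy⟩ := u
  simp only at hu2
  subst hu2
  set dR : Fin n → ℝ :=
    fun i => ∑ l, (dβ l * φ (Xbar l) i + βbar l * (G1f φ Xbar i l) (dX l)) with hdRdef
  have hdR : ∀ i, Dres φ βbar Xbar i ((dβ, dX), (0 : Yt)) = dR i := by
    intro i
    rw [Dres_apply]
    simp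
    rfl
  have H1 : ∀ j, ∑ i, (φ (Xbar j) i * dR i
      + Rm φ βbar Xbar ybar i * (G1f φ Xbar i j) (dX j)) = 0 := by
    intro j
    have := congrFun hu (Sum.inl j)
    rw [DFf] at this
    simp only [ContinuousLinearMap.pi_apply, Sum.elim_inl, Pi.zero_apply] at this
    rw [Dinl_apply] at this
    simpa [hdR] using this
  have H2 : ∀ j r, ∑ i, ((G1f φ Xbar i j) (EuclideanSpace.single r 1) * dR i
      + Rm φ βbar Xbar ybar i
        * (G2f φ Xbar i j) (dX j) (EuclideanSpace.single r 1)) = 0 := by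
    intro j r
    have := congrFun hu (Sum.inr (j, r))
    rw [DFf] at this
    simp only [ContinuousLinearMap.pi_apply, Sum.elim_inr, Pi.zero_apply] at this
    rw [Dinr_apply] at this
    simpa [hdR] using this
  -- first block: ∑ i, φ_ij * dR i = 0
  have H1' : ∀ j, ∑ i, φ (Xbar j) i * dR i = 0 := by
    intro j
    have h0 : ∑ i, Rm φ βbar Xbar ybar i * (G1f φ Xbar i j) (dX j) = 0 := by
      rw [← hgrad0 j (dX j)]
      exact Finset.sum_congr rfl fun i _ => mul_comm _ _
    have := H1 j
    rw [Finset.sum_add_distrib, h0, add_zero] at this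
    exact this
  -- second block, contracted with dX j
  have H2' : ∀ j, (∑ i, (G1f φ Xbar i j) (dX j) * dR i)
      + ∑ i, Rm φ βbar Xbar ybar i * (G2f φ Xbar i j) (dX j) (dX j) = 0 := by
    intro j
    have hc : ∑ r, dX j r * (∑ i, ((G1f φ Xbar i j) (EuclideanSpace.single r 1) * dR i
        + Rm φ βbar Xbar ybar i
          * (G2f φ Xbar i j) (dX j) (EuclideanSpace.single r 1))) = 0 := by
      simp [H2]
    rw [← Finset.sum_add_distrib, ← hc]
    simp_rw [Finset.mul_sum]
    rw [Finset.sum_comm]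
    refine Finset.sum_congr rfl fun i _ => ?_
    rw [clm_euclid_expand_real (G1f φ Xbar i j) (dX j),
      clm_euclid_expand_real ((G2f φ Xbar i j) (dX j)) (dX j), Finset.sum_mul,
      Finset.mul_sum, ← Finset.sum_add_distrib]
    refine Finset.sum_congr rfl fun r _ => ?_
    ring
  -- the key sum identity
  have e1i : ∀ i, dR i * dR i = ∑ l, (dβ l * (φ (Xbar l) i * dR i)
      + βbar l * ((G1f φ Xbar i l) (dX l) * dR i)) := by
    intro i
    calc dR i * dR i
        = (∑ l, (dβ l * φ (Xbar l) i + βbar l * (G1f φ Xbar i l) (dX l))) * dR i := rfl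
      _ = ∑ l, (dβ l * φ (Xbar l) i + βbar l * (G1f φ Xbar i l) (dX l)) * dR i :=
          Finset.sum_mul _ _ _
      _ = _ := Finset.sum_congr rfl fun l _ => by ring
  have e1 : ∑ i, dR i * dR i = ∑ l, (dβ l * ∑ i, φ (Xbar l) i * dR i
      + βbar l * ∑ i, (G1f φ Xbar i l) (dX l) * dR i) :=
    calc ∑ i, dR i * dR i
        = ∑ i, ∑ l, (dβ l * (φ (Xbar l) i * dR i)
            + βbar l * ((G1f φ Xbar i l) (dX l) * dR i)) :=
          Finset.sum_congr rfl fun i _ => e1i i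
      _ = ∑ l, ∑ i, (dβ l * (φ (Xbar l) i * dR i)
            + βbar l * ((G1f φ Xbar i l) (dX l) * dR i)) := Finset.sum_comm
      _ = _ := by
          refine Finset.sum_congr rfl fun l _ => ?_
          rw [Finset.mul_sum, Finset.mul_sum, ← Finset.sum_add_distrib]
  have hsum : (∑ i, dR i * dR i)
      + (∑ l, βbar l * ∑ i, Rm φ βbar Xbar ybar i * (G2f φ Xbar i l) (dX l) (dX l)) = 0 := by
    rw [e1, ← Finset.sum_add_distrib]
    refine Finset.sum_eq_zero fun l _ => ?_
    rw [H1' l, mul_zero, zero_add, ← mul_add, H2' l, mul_zero]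
  -- nonnegativity
  have hnn2 : ∀ l, 0 ≤ βbar l * ∑ i, Rm φ βbar Xbar ybar i * (G2f φ Xbar i l) (dX l) (dX l) := by
    intro l
    by_cases h : dX l = 0
    · simp [h]
    · have hpos := hQ l (dX l) h
      have hb2 : (0:ℝ) < βbar l * βbar l := mul_self_pos.2 (hβ l)
      have : βbar l * ∑ i, Rm φ βbar Xbar ybar i * (G2f φ Xbar i l) (dX l) (dX l)
          = (βbar l * βbar l)
            * ((1 / βbar l) * ∑ i, Rm φ βbar Xbar ybar i * (G2f φ Xbar i l) (dX l) (dX l)) := by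
        have hb : βbar l * βbar l * (1 / βbar l) = βbar l := by
          field_simp
        rw [← mul_assoc, hb]
      rw [this]
      positivity
  have hA : 0 ≤ ∑ i, dR i * dR i := Finset.sum_nonneg fun i _ => mul_self_nonneg _
  have hB : 0 ≤ ∑ l, βbar l * ∑ i, Rm φ βbar Xbar ybar i * (G2f φ Xbar i l) (dX l) (dX l) :=
    Finset.sum_nonneg fun l _ => hnn2 l
  have hA0 : ∑ i, dR i * dR i = 0 := by linarith
  have hB0 : ∑ l, βbar l * ∑ i, Rm φ βbar Xbar ybar i * (G2f φ Xbar i l) (dX l) (dX l) = 0 := by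
    linarith
  have hdR0 : ∀ i, dR i = 0 := by
    intro i
    have := (Finset.sum_eq_zero_iff_of_nonneg
      (fun i _ => mul_self_nonneg (dR i))).1 hA0 i (Finset.mem_univ i)
    exact mul_self_eq_zero.1 this
  have hdX0 : ∀ l, dX l = 0 := by
    intro l
    by_contra h
    have hpos := hQ l (dX l) h
    have hl := (Finset.sum_eq_zero_iff_of_nonneg (fun l _ => hnn2 l)).1 hB0 l (Finset.mem_univ l)
    have : ∑ i, Rm φ βbar Xbar ybar i * (G2f φ Xbar i l) (dX l) (dX l) = 0 :=
      (mul_eq_zero.1 hl).resolve_left (hβ l)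
    rw [this, mul_zero] at hpos
    exact lt_irrefl _ hpos
  have hdβ0 : dβ = 0 := by
    apply hinj
    funext i
    have h0 := hdR0 i
    rw [hdRdef] at h0
    simpa [hdX0] using h0
  have hdX0' : dX = 0 := funext hdX0
  rw [hdβ0, hdX0']
  rfl

lemma sum_swap3 {m1 m2 m3 : Type*} [Fintype m1] [Fintype m2] [Fintype m3]
    (f : m1 → m2 → m3 → ℝ) :
    ∑ r, ∑ t, ∑ i, f r t i = ∑ i, ∑ r, ∑ t, f r t i :=
  calc ∑ r, ∑ t, ∑ i, f r t i
      = ∑ r, ∑ i, ∑ t, f r t i := Finset.sum_congr rfl fun r _ => Finset.sum_comm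
    _ = ∑ i, ∑ r, ∑ t, f r t i := Finset.sum_comm

lemma posdef_to_quad (j : Fin k)
    (hZp : Matrix.PosDef (Matrix.of fun r t : Fin d =>
      (1 / βbar j) * ∑ i, Rm φ βbar Xbar ybar i
        * (G2f φ Xbar i j) (EuclideanSpace.single r 1) (EuclideanSpace.single t 1)))
    (v : Ed) (hv : v ≠ 0) :
    0 < (1 / βbar j) * ∑ i, Rm φ βbar Xbar ybar i * (G2f φ Xbar i j) v v := by
  have hw : (fun r => v r : Fin d → ℝ) ≠ 0 := by
    intro h
    apply hv
    ext r
    exact congrFun h r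
  have hq := hZp.dotProduct_mulVec_pos (x := fun r => v r) hw
  have hGvv : ∀ i, (G2f φ Xbar i j) v v
      = ∑ r, v r * ∑ t, v t * (G2f φ Xbar i j) (EuclideanSpace.single r 1)
          (EuclideanSpace.single t 1) := by
    intro i
    rw [clm_euclid_expand (G2f φ Xbar i j) v, ContinuousLinearMap.sum_apply]
    refine Finset.sum_congr rfl fun r _ => ?_
    rw [ContinuousLinearMap.smul_apply, smul_eq_mul]
    congr 1
    exact clm_euclid_expand_real _ v
  have hform : dotProduct (star (fun r => v r)) ((Matrix.of fun r t : Fin d =>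
      (1 / βbar j) * ∑ i, Rm φ βbar Xbar ybar i
        * (G2f φ Xbar i j) (EuclideanSpace.single r 1) (EuclideanSpace.single t 1)) *ᵥ
          (fun r => v r))
      = (1 / βbar j) * ∑ i, Rm φ βbar Xbar ybar i * (G2f φ Xbar i j) v v := by
    simp only [dotProduct, Matrix.mulVec, Matrix.of_apply, Pi.star_apply, star_trivial,
      hGvv]
    simp only [Finset.mul_sum, Finset.sum_mul]
    rw [sum_swap3 (fun r t i => v r * ((1 / βbar j) * (Rm φ βbar Xbar ybar i
      * (G2f φ Xbar i j) (EuclideanSpace.single r 1) (EuclideanSpace.single t 1)) * v t))]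
    refine Finset.sum_congr rfl fun i _ => Finset.sum_congr rfl fun r _ =>
      Finset.sum_congr rfl fun t _ => by ring
  rw [hform] at hq
  exact hq
end


/-- (The C¹ solution-path construction in the proof of Theorem 4.2.)
Let `Ω ⊆ ℝ^d` be open, `φ : Ω → ℝ^n` twice continuously differentiable, `λ > 0`,
`s ∈ {−1,+1}^k`, and `F(β, X, y) = Γ_Xᵀ(Φ_X β − y) + λ(s, 0)`. If `F(β̄, X̄, ȳ) = 0`,
`Φ_{X̄}` is injective, every `β̄_j ≠ 0`, and each `(1/β̄_j) Z_j` is positive definite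
(`Z_j = Σ_i (Φ_{X̄}β̄ − ȳ)_i ∇²φ_i(x̄_j)`), then there are open neighbourhoods `U ∋ ȳ`,
`V ∋ (β̄, X̄)` (contained in `ℝ^k × Ω^k`) and a `C¹` map `g : U → V` with `g(ȳ) = (β̄, X̄)`,
`F(g(y), y) = 0` on `U`, and `g(y)` is the unique zero of `F(·, ·, y)` in `V`. -/
theorem blasso_c1_solution_path {d n k : ℕ}
    (Ω : Set (EuclideanSpace ℝ (Fin d))) (hΩ : IsOpen Ω)
    (φ : EuclideanSpace ℝ (Fin d) → EuclideanSpace ℝ (Fin n))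
    (hφ : ContDiffOn ℝ 2 φ Ω)
    (lam : ℝ) (hlam : 0 < lam)
    (s : Fin k → ℝ) (hs : ∀ j, s j = 1 ∨ s j = -1)
    (F : (Fin k → ℝ) → (Fin k → EuclideanSpace ℝ (Fin d)) → EuclideanSpace ℝ (Fin n) →
      (Fin k ⊕ Fin k × Fin d) → ℝ)
    (hF : F = fun β X y =>
      (Matrix.of fun (i : Fin n) (c : Fin k ⊕ Fin k × Fin d) => Sum.elim
        (fun j => φ (X j) i)
        (fun jr => fderiv ℝ (fun x => φ x i) (X jr.1) (EuclideanSpace.single jr.2 1)) c)ᵀ.mulVec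
          (fun i => (∑ j, β j * φ (X j) i) - y i)
        + lam • Sum.elim s fun _ => 0)
    (βbar : Fin k → ℝ) (Xbar : Fin k → EuclideanSpace ℝ (Fin d))
    (hXΩ : ∀ j, Xbar j ∈ Ω)
    (ybar : EuclideanSpace ℝ (Fin n))
    (hzero : F βbar Xbar ybar = 0)
    (hinj : ∀ v : Fin k → ℝ, (fun i : Fin n => ∑ j, v j * φ (Xbar j) i) = 0 → v = 0)
    (hβ : ∀ j, βbar j ≠ 0)
    (hZ : ∀ j, Matrix.PosDef (Matrix.of fun r t : Fin d =>
      (1 / βbar j) * ∑ i, ((∑ j' , βbar j' * φ (Xbar j') i) - ybar i) *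
        iteratedFDeriv ℝ 2 (fun x => φ x i) (Xbar j)
          ![EuclideanSpace.single r 1, EuclideanSpace.single t 1])) :
    ∃ (U : Set (EuclideanSpace ℝ (Fin n)))
      (V : Set ((Fin k → ℝ) × (Fin k → EuclideanSpace ℝ (Fin d))))
      (g : EuclideanSpace ℝ (Fin n) → (Fin k → ℝ) × (Fin k → EuclideanSpace ℝ (Fin d))),
      IsOpen U ∧ ybar ∈ U ∧ IsOpen V ∧ (βbar, Xbar) ∈ V ∧
      (∀ p ∈ V, ∀ j, p.2 j ∈ Ω) ∧
      ContDiffOn ℝ 1 g U ∧ g ybar = (βbar, Xbar) ∧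
      ∀ y ∈ U, g y ∈ V ∧ F (g y).1 (g y).2 y = 0 ∧
        ∀ p ∈ V, F p.1 p.2 y = 0 → p = g y := by
  classical
  -- abbreviations
  set a : ((Fin k → ℝ) × (Fin k → EuclideanSpace ℝ (Fin d))) × EuclideanSpace ℝ (Fin n) :=
    ((βbar, Xbar), ybar) with ha
  -- smoothness of the coordinates of φ at the points Xbar j
  have hφat : ∀ l, ContDiffAt ℝ 2 φ (Xbar l) := fun l =>
    hφ.contDiffAt (hΩ.mem_nhds (hXΩ l))
  have hφi : ∀ (i : Fin n) (l : Fin k), ContDiffAt ℝ 2 (fun x => φ x i) (Xbar l) := by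
    intro i l
    have h := ((EuclideanSpace.proj (𝕜 := ℝ) i).contDiff.contDiffAt).comp (Xbar l) (hφat l)
    exact h.congr_of_eventuallyEq (Filter.Eventually.of_forall fun x => rfl)
  -- identification of F with Fhat
  have hFeq : ∀ β X y, F β X y = Fhat φ lam s ((β, X), y) := by
    intro β X y
    funext c
    rw [hF]
    cases c with
    | inl j => simp [Fhat, Matrix.mulVec, dotProduct]
    | inr jr => simp [Fhat, Matrix.mulVec, dotProduct]
  have hFhat0 : Fhat φ lam s a = 0 := (hFeq βbar Xbar ybar) ▸ hzero
  -- consequences of first-order optimality: gradient part vanishes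
  have base : ∀ (j : Fin k) (r : Fin d),
      ∑ i, (G1f φ Xbar i j) (EuclideanSpace.single r 1) * Rm φ βbar Xbar ybar i = 0 := by
    intro j r
    have := congrFun hFhat0 (Sum.inr (j, r))
    simpa [Fhat, G1f, Rm] using this
  have hgrad0 : ∀ (j : Fin k) (v : EuclideanSpace ℝ (Fin d)),
      ∑ i, (G1f φ Xbar i j) v * Rm φ βbar Xbar ybar i = 0 := by
    intro j v
    calc ∑ i, (G1f φ Xbar i j) v * Rm φ βbar Xbar ybar i
        = ∑ i, ∑ r, v r * (G1f φ Xbar i j) (EuclideanSpace.single r 1)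
            * Rm φ βbar Xbar ybar i := by
          refine Finset.sum_congr rfl fun i _ => ?_
          rw [clm_euclid_expand_real (G1f φ Xbar i j) v, Finset.sum_mul]
      _ = ∑ r, ∑ i, v r * (G1f φ Xbar i j) (EuclideanSpace.single r 1)
            * Rm φ βbar Xbar ybar i := Finset.sum_comm
      _ = 0 := by
          refine Finset.sum_eq_zero fun r _ => ?_
          have : ∑ i, v r * (G1f φ Xbar i j) (EuclideanSpace.single r 1)
              * Rm φ βbar Xbar ybar i
              = v r * ∑ i, (G1f φ Xbar i j) (EuclideanSpace.single r 1)
                  * Rm φ βbar Xbar ybar i := by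
            rw [Finset.mul_sum]
            exact Finset.sum_congr rfl fun i _ => by ring
          rw [this, base j r, mul_zero]
  -- positivity of the Hessian blocks
  have hZ' : ∀ j, Matrix.PosDef (Matrix.of fun r t : Fin d =>
      (1 / βbar j) * ∑ i, Rm φ βbar Xbar ybar i
        * (G2f φ Xbar i j) (EuclideanSpace.single r 1) (EuclideanSpace.single t 1)) := by
    intro j
    have hmat : (Matrix.of fun r t : Fin d =>
        (1 / βbar j) * ∑ i, ((∑ j' , βbar j' * φ (Xbar j') i) - ybar i) *
          iteratedFDeriv ℝ 2 (fun x => φ x i) (Xbar j)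
            ![EuclideanSpace.single r 1, EuclideanSpace.single t 1])
        = Matrix.of fun r t : Fin d =>
        (1 / βbar j) * ∑ i, Rm φ βbar Xbar ybar i
          * (G2f φ Xbar i j) (EuclideanSpace.single r 1) (EuclideanSpace.single t 1) := by
      ext r t
      simp only [Matrix.of_apply]
      congr 1
      refine Finset.sum_congr rfl fun i _ => ?_
      rw [iteratedFDeriv_two_apply]
      simp [Rm, G2f]
    exact hmat ▸ hZ j
  have hQ : ∀ (j : Fin k) (v : EuclideanSpace ℝ (Fin d)), v ≠ 0 →
      0 < (1 / βbar j) * ∑ i, Rm φ βbar Xbar ybar i * (G2f φ Xbar i j) v v :=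
    fun j v hv => posdef_to_quad φ βbar Xbar ybar j (hZ' j) v hv
  -- the extended map G and its derivative
  set Gm : (((Fin k → ℝ) × (Fin k → EuclideanSpace ℝ (Fin d))) × EuclideanSpace ℝ (Fin n)) →
      (((Fin k ⊕ Fin k × Fin d) → ℝ) × EuclideanSpace ℝ (Fin n)) :=
    fun p => (Fhat φ lam s p, p.2) with hGm
  set DG := (DFf φ βbar Xbar ybar).prod
    (ContinuousLinearMap.snd ℝ ((Fin k → ℝ) × (Fin k → EuclideanSpace ℝ (Fin d)))
      (EuclideanSpace ℝ (Fin n))) with hDG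
  have hGD : HasFDerivAt Gm DG a :=
    (hasFDerivAt_Fhat φ βbar Xbar ybar hφi lam s).prodMk hasFDerivAt_snd
  have hGC : ContDiffAt ℝ 1 Gm a :=
    (contDiffAt_Fhat φ βbar Xbar ybar hφi lam s).prodMk contDiffAt_snd
  -- injectivity of the derivative
  have hker : ∀ w, DG w = 0 → w = 0 := by
    intro w hw
    have h1 : DFf φ βbar Xbar ybar w = 0 := congrArg Prod.fst hw
    have h2 : w.2 = 0 := congrArg Prod.snd hw
    exact DFf_inj φ βbar Xbar ybar hinj hβ hgrad0 hQ w h2 h1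
  have hDGinj : Function.Injective DG := by
    intro u v huv
    have := hker (u - v) (by rw [map_sub, huv, sub_self])
    exact sub_eq_zero.mp this
  have hrank : Module.finrank ℝ
      (((Fin k → ℝ) × (Fin k → EuclideanSpace ℝ (Fin d))) × EuclideanSpace ℝ (Fin n))
      = Module.finrank ℝ (((Fin k ⊕ Fin k × Fin d) → ℝ) × EuclideanSpace ℝ (Fin n)) := by
    simp [Module.finrank_prod, Module.finrank_pi, Module.finrank_pi_fintype,
      finrank_euclideanSpace, Fintype.card_sum, Fintype.card_prod, Fintype.card_fin]
  let eC := (LinearMap.linearEquivOfInjective (DG : _ →ₗ[ℝ] _)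
    hDGinj hrank).toContinuousLinearEquiv
  have heC : (eC : _ →L[ℝ] _) = DG := ContinuousLinearMap.ext fun _ => rfl
  have hGD' : HasFDerivAt Gm (eC : _ →L[ℝ] _) a := by rw [heC]; exact hGD
  -- inverse function theorem
  set P := hGC.toOpenPartialHomeomorph Gm hGD' one_ne_zero with hP
  have hasrc : a ∈ P.source := hGC.mem_toOpenPartialHomeomorph_source hGD' one_ne_zero
  have htgt : Gm a ∈ P.target := hGC.image_mem_toOpenPartialHomeomorph_target hGD' one_ne_zero
  have hPcoe : (P : _ → _) = Gm := rfl
  have hGa : Gm a = (0, ybar) := by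
    rw [hGm]
    simp only
    rw [hFhat0]
  have hsymmCD : ContDiffAt ℝ 1 (⇑P.symm) (Gm a) := hGC.to_localInverse hGD' one_ne_zero
  obtain ⟨u, huo, hxu, hucd0⟩ := hsymmCD.contDiffOn' le_rfl (by simp)
  rw [Set.insert_eq_of_mem (Set.mem_univ _), Set.univ_inter] at hucd0
  -- a product neighbourhood inside the source
  obtain ⟨V₀, U₀, hV₀o, hU₀o, hV₀m, hU₀m, hsub⟩ :=
    isOpen_prod_iff.1 P.open_source (βbar, Xbar) ybar hasrc
  -- the neighbourhood V
  set Vset : Set ((Fin k → ℝ) × (Fin k → EuclideanSpace ℝ (Fin d))) :=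
    V₀ ∩ {z | ∀ j, z.2 j ∈ Ω} with hVset
  have hVopen : IsOpen Vset := by
    refine hV₀o.inter ?_
    have : {z : (Fin k → ℝ) × (Fin k → EuclideanSpace ℝ (Fin d)) | ∀ j, z.2 j ∈ Ω}
        = ⋂ j, (fun z : (Fin k → ℝ) × (Fin k → EuclideanSpace ℝ (Fin d)) => z.2 j) ⁻¹' Ω := by
      ext z
      simp
    rw [this]
    exact isOpen_iInter_of_finite fun j =>
      hΩ.preimage ((continuous_apply j).comp continuous_snd)
  have hVmem : (βbar, Xbar) ∈ Vset := ⟨hV₀m, fun j => hXΩ j⟩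
  -- the neighbourhood U
  set O1 : Set (((Fin k ⊕ Fin k × Fin d) → ℝ) × EuclideanSpace ℝ (Fin n)) :=
    P.symm.source ∩ P.symm ⁻¹' (Vset ×ˢ U₀) with hO1
  have hO1open : IsOpen O1 := P.symm.isOpen_inter_preimage (hVopen.prod hU₀o)
  set Uset : Set (EuclideanSpace ℝ (Fin n)) :=
    (fun y : EuclideanSpace ℝ (Fin n) => (0, y)) ⁻¹' (O1 ∩ u) with hUset
  have hUopen : IsOpen Uset :=
    (hO1open.inter huo).preimage (continuous_const.prodMk continuous_id)
  have hsymm_a : P.symm (0, ybar) = a := by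
    have := P.left_inv hasrc
    rw [hPcoe, hGa] at this
    exact this
  have hybarU : ybar ∈ Uset := by
    refine ⟨⟨?_, ?_⟩, ?_⟩
    · rw [P.symm_source]
      rw [hGa] at htgt
      exact htgt
    · rw [Set.mem_preimage, hsymm_a]
      exact Set.mem_prod.2 ⟨hVmem, hU₀m⟩
    · rw [hGa] at hxu
      exact hxu
  -- the solution path g
  set g : EuclideanSpace ℝ (Fin n) → (Fin k → ℝ) × (Fin k → EuclideanSpace ℝ (Fin d)) :=
    fun y => (P.symm (0, y)).1 with hg
  have hgC : ContDiffOn ℝ 1 g Uset := by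
    have hemb : ContDiff ℝ 1 (fun y : EuclideanSpace ℝ (Fin n) =>
        ((0 : (Fin k ⊕ Fin k × Fin d) → ℝ), y)) := contDiff_const.prodMk contDiff_id
    have hmaps : Set.MapsTo (fun y : EuclideanSpace ℝ (Fin n) =>
        ((0 : (Fin k ⊕ Fin k × Fin d) → ℝ), y)) Uset u := fun y hy => hy.2
    have hcomp : ContDiffOn ℝ 1 (fun y : EuclideanSpace ℝ (Fin n) => P.symm (0, y)) Uset :=
      hucd0.comp hemb.contDiffOn hmaps
    exact (contDiff_fst.comp_contDiffOn hcomp : _)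
  have hgybar : g ybar = (βbar, Xbar) := by
    rw [hg]
    simp only
    rw [hsymm_a]
  refine ⟨Uset, Vset, g, hUopen, hybarU, hVopen, hVmem, fun p hp j => hp.2 j, hgC, hgybar, ?_⟩
  intro y hy
  obtain ⟨⟨hyT, hyV⟩, _hyu⟩ := hy
  rw [P.symm_source] at hyT
  set z := P.symm (0, y) with hz
  have hzsrc : z ∈ P.source := P.map_target hyT
  have hGz : Gm z = (0, y) := by
    have := P.right_inv hyT
    rw [hPcoe] at this
    exact this
  have hz2 : z.2 = y := congrArg Prod.snd hGz
  have hFz : Fhat φ lam s z = 0 := congrArg Prod.fst hGz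
  have hyV' : z ∈ Vset ×ˢ U₀ := hyV
  have hyU₀ : y ∈ U₀ := by
    have := (Set.mem_prod.1 hyV').2
    rwa [hz2] at this
  constructor
  · exact (Set.mem_prod.1 hyV').1
  constructor
  · rw [hFeq]
    have : (((g y).1, (g y).2), y) = z := by
      rw [hg]
      simp only
      exact Prod.ext rfl hz2.symm
    rw [this]
    exact hFz
  · intro p hp hpF
    have hq : Fhat φ lam s ((p, y) :
        ((Fin k → ℝ) × (Fin k → EuclideanSpace ℝ (Fin d))) × EuclideanSpace ℝ (Fin n)) = 0 := by
      have := hFeq p.1 p.2 y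
      rw [hpF] at this
      exact this.symm
    have hqsrc : ((p, y) :
        ((Fin k → ℝ) × (Fin k → EuclideanSpace ℝ (Fin d))) × EuclideanSpace ℝ (Fin n))
        ∈ P.source := hsub (Set.mem_prod.2 ⟨hp.1, hyU₀⟩)
    have hPq : P (p, y) = P z := by
      rw [hPcoe]
      rw [hGz, hGm]
      simp only
      rw [hq]
    have := P.injOn hqsrc hzsrc hPq
    have hfst := congrArg Prod.fst this
    exact hfst
end

section
/- Let Ω be a compact metric space, φ : Ω → ℝ^n continuous, and λ > 0. For any y, y' ∈ ℝ^n, if m minimizes the Blasso objective J_y and m' minimizes J_{y'} over all finite signed Borel measures on Ω, then ‖Φm − Φm'‖₂ ≤ ‖y − y'‖₂. In particular the estimator y ↦ μ̂(y) := Φ m_y is Lipschitz continuous on ℝ^n (hence differentiable almost everywhere). -/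
open MeasureTheory

/-- `Φ m = ∫ φ dm` for a finite signed Borel measure `m`, via the Jordan decomposition. -/
noncomputable def blassoPhi {Ω : Type*} [MeasurableSpace Ω] {ι : Type*} [Fintype ι]
    (φ : Ω → EuclideanSpace ℝ ι) (m : SignedMeasure Ω) : EuclideanSpace ℝ ι :=
  (∫ x, φ x ∂m.toJordanDecomposition.posPart) -
    ∫ x, φ x ∂m.toJordanDecomposition.negPart

/-- The Blasso objective `J_y(m) = (1/2)‖Φm − y‖₂² + λ|m|_TV`. -/
noncomputable def blassoObj {Ω : Type*} [MeasurableSpace Ω] {ι : Type*} [Fintype ι]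
    (φ : Ω → EuclideanSpace ℝ ι) (lam : ℝ) (y : EuclideanSpace ℝ ι)
    (m : SignedMeasure Ω) : ℝ :=
  (1 / 2) * ‖blassoPhi φ m - y‖ ^ 2 + lam * (m.totalVariation Set.univ).toReal

section Aux

open scoped InnerProductSpace

variable {Ω : Type*} [MeasurableSpace Ω]

/-- If `s = μ - ν` then the Jordan parts satisfy `P + ν = μ + N`. -/
lemma blasso_jordan_add_eq (μ ν : Measure Ω) [IsFiniteMeasure μ] [IsFiniteMeasure ν] :
    (μ.toSignedMeasure - ν.toSignedMeasure).toJordanDecomposition.posPart + ν =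
      μ + (μ.toSignedMeasure - ν.toSignedMeasure).toJordanDecomposition.negPart := by
  set s := μ.toSignedMeasure - ν.toSignedMeasure with hsdef
  have h := s.toSignedMeasure_toJordanDecomposition
  unfold MeasureTheory.JordanDecomposition.toSignedMeasure at h
  ext A hA
  have h2 := congrArg (fun v : SignedMeasure Ω => v A) h
  simp only [VectorMeasure.sub_apply] at h2
  rw [Measure.toSignedMeasure_apply_measurable hA,
    Measure.toSignedMeasure_apply_measurable hA, hsdef, VectorMeasure.sub_apply,
    Measure.toSignedMeasure_apply_measurable hA,
    Measure.toSignedMeasure_apply_measurable hA] at h2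
  rw [Measure.add_apply, Measure.add_apply]
  refine (ENNReal.toReal_eq_toReal_iff' (by finiteness) (by finiteness)).mp ?_
  rw [ENNReal.toReal_add (by finiteness) (by finiteness),
    ENNReal.toReal_add (by finiteness) (by finiteness)]
  simp only [Measure.real, ← hsdef] at h2
  linarith

/-- Decomposition of a sum of signed measures via Jordan parts. -/
lemma blasso_sm_add (s t : SignedMeasure Ω) :
    s + t = (s.toJordanDecomposition.posPart + t.toJordanDecomposition.posPart).toSignedMeasure
      - (s.toJordanDecomposition.negPart + t.toJordanDecomposition.negPart).toSignedMeasure := by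
  have hs := s.toSignedMeasure_toJordanDecomposition
  have ht := t.toSignedMeasure_toJordanDecomposition
  unfold MeasureTheory.JordanDecomposition.toSignedMeasure at hs ht
  rw [Measure.toSignedMeasure_add, Measure.toSignedMeasure_add]
  conv_lhs => rw [← hs, ← ht]
  abel

variable [TopologicalSpace Ω] [CompactSpace Ω] [OpensMeasurableSpace Ω]
  {ι : Type*} [Fintype ι] {φ : Ω → EuclideanSpace ℝ ι}

lemma blasso_integrable (hφ : Continuous φ) (μ : Measure Ω) [IsFiniteMeasure μ] :
    Integrable φ μ :=
  hφ.integrable_of_hasCompactSupport (isClosed_tsupport φ).isCompact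

lemma blassoPhi_sub_measures (hφ : Continuous φ) (μ ν : Measure Ω)
    [IsFiniteMeasure μ] [IsFiniteMeasure ν] :
    blassoPhi φ (μ.toSignedMeasure - ν.toSignedMeasure) = (∫ x, φ x ∂μ) - ∫ x, φ x ∂ν := by
  have key := blasso_jordan_add_eq μ ν
  have h1 : (∫ x, φ x ∂((μ.toSignedMeasure -
        ν.toSignedMeasure).toJordanDecomposition.posPart + ν)) =
      ∫ x, φ x ∂(μ + (μ.toSignedMeasure - ν.toSignedMeasure).toJordanDecomposition.negPart) := by
    rw [key]
  rw [integral_add_measure (blasso_integrable hφ _) (blasso_integrable hφ _),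
    integral_add_measure (blasso_integrable hφ _) (blasso_integrable hφ _)] at h1
  unfold blassoPhi
  rw [sub_eq_sub_iff_add_eq_add]
  exact h1

lemma blassoPhi_add (hφ : Continuous φ) (s t : SignedMeasure Ω) :
    blassoPhi φ (s + t) = blassoPhi φ s + blassoPhi φ t := by
  rw [blasso_sm_add s t, blassoPhi_sub_measures hφ,
    integral_add_measure (blasso_integrable hφ _) (blasso_integrable hφ _),
    integral_add_measure (blasso_integrable hφ _) (blasso_integrable hφ _)]
  unfold blassoPhi
  abel

omit [TopologicalSpace Ω] [CompactSpace Ω] [OpensMeasurableSpace Ω] in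
lemma blassoPhi_neg (s : SignedMeasure Ω) : blassoPhi φ (-s) = -blassoPhi φ s := by
  unfold blassoPhi
  rw [s.toJordanDecomposition_neg]
  simp [neg_sub]

omit [TopologicalSpace Ω] [CompactSpace Ω] [OpensMeasurableSpace Ω] in
lemma blassoPhi_smul (s : SignedMeasure Ω) {r : ℝ} (hr : 0 ≤ r) :
    blassoPhi φ (r • s) = r • blassoPhi φ s := by
  unfold blassoPhi
  rw [s.toJordanDecomposition_smul_real,
    JordanDecomposition.real_smul_posPart_nonneg _ _ hr,
    JordanDecomposition.real_smul_negPart_nonneg _ _ hr,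
    integral_smul_nnreal_measure, integral_smul_nnreal_measure, ← smul_sub,
    NNReal.smul_def, Real.coe_toNNReal _ hr]

lemma blassoPhi_sub (hφ : Continuous φ) (s t : SignedMeasure Ω) :
    blassoPhi φ (s - t) = blassoPhi φ s - blassoPhi φ t := by
  rw [sub_eq_add_neg, blassoPhi_add hφ, blassoPhi_neg, sub_eq_add_neg]

omit [TopologicalSpace Ω] [CompactSpace Ω] [OpensMeasurableSpace Ω] in
lemma blasso_tv_sub_le (μ ν : Measure Ω) [IsFiniteMeasure μ] [IsFiniteMeasure ν] :
    ((μ.toSignedMeasure - ν.toSignedMeasure).totalVariation Set.univ).toReal ≤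
      (μ Set.univ).toReal + (ν Set.univ).toReal := by
  set s := μ.toSignedMeasure - ν.toSignedMeasure with hsdef
  obtain ⟨A, hAm, hPA, hNA⟩ := s.toJordanDecomposition.mutuallySingular
  have key := blasso_jordan_add_eq μ ν
  rw [← hsdef] at key
  set P := s.toJordanDecomposition.posPart
  set N := s.toJordanDecomposition.negPart
  have hP : P Set.univ ≤ μ Set.univ := by
    calc P Set.univ = P (A ∪ Aᶜ) := by rw [Set.union_compl_self]
    _ ≤ P A + P Aᶜ := measure_union_le _ _
    _ = P Aᶜ := by rw [hPA, zero_add]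
    _ ≤ (P + ν) Aᶜ := by rw [Measure.add_apply]; exact le_self_add
    _ = (μ + N) Aᶜ := by rw [key]
    _ = μ Aᶜ + N Aᶜ := by rw [Measure.add_apply]
    _ = μ Aᶜ := by rw [hNA, add_zero]
    _ ≤ μ Set.univ := measure_mono (Set.subset_univ _)
  have hN : N Set.univ ≤ ν Set.univ := by
    calc N Set.univ = N (A ∪ Aᶜ) := by rw [Set.union_compl_self]
    _ ≤ N A + N Aᶜ := measure_union_le _ _
    _ = N A := by rw [hNA, add_zero]
    _ ≤ (μ + N) A := by rw [Measure.add_apply]; exact le_add_self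
    _ = (P + ν) A := by rw [key]
    _ = P A + ν A := by rw [Measure.add_apply]
    _ = ν A := by rw [hPA, zero_add]
    _ ≤ ν Set.univ := measure_mono (Set.subset_univ _)
  have htv : s.totalVariation Set.univ = P Set.univ + N Set.univ := rfl
  rw [htv, ENNReal.toReal_add (by finiteness) (by finiteness)]
  have h1 := ENNReal.toReal_le_toReal (by finiteness) (measure_ne_top μ Set.univ) |>.mpr hP
  have h2 := ENNReal.toReal_le_toReal (by finiteness) (measure_ne_top ν Set.univ) |>.mpr hN
  linarith

omit [TopologicalSpace Ω] [CompactSpace Ω] [OpensMeasurableSpace Ω] in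
lemma blasso_tv_apply (s : SignedMeasure Ω) :
    (s.totalVariation Set.univ).toReal =
      (s.toJordanDecomposition.posPart Set.univ).toReal +
        (s.toJordanDecomposition.negPart Set.univ).toReal := by
  have htv : s.totalVariation Set.univ =
      s.toJordanDecomposition.posPart Set.univ + s.toJordanDecomposition.negPart Set.univ := rfl
  rw [htv, ENNReal.toReal_add (by finiteness) (by finiteness)]

omit [TopologicalSpace Ω] [CompactSpace Ω] [OpensMeasurableSpace Ω] in
lemma blasso_tv_add_le (s t : SignedMeasure Ω) :
    ((s + t).totalVariation Set.univ).toReal ≤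
      (s.totalVariation Set.univ).toReal + (t.totalVariation Set.univ).toReal := by
  rw [blasso_sm_add s t]
  refine le_trans (blasso_tv_sub_le _ _) ?_
  rw [Measure.add_apply, Measure.add_apply,
    ENNReal.toReal_add (by finiteness) (by finiteness),
    ENNReal.toReal_add (by finiteness) (by finiteness),
    blasso_tv_apply s, blasso_tv_apply t]
  linarith

omit [TopologicalSpace Ω] [CompactSpace Ω] [OpensMeasurableSpace Ω] in
lemma blasso_tv_smul (s : SignedMeasure Ω) {r : ℝ} (hr : 0 ≤ r) :
    ((r • s).totalVariation Set.univ).toReal = r * (s.totalVariation Set.univ).toReal := by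
  rw [blasso_tv_apply, blasso_tv_apply, s.toJordanDecomposition_smul_real,
    JordanDecomposition.real_smul_posPart_nonneg _ _ hr,
    JordanDecomposition.real_smul_negPart_nonneg _ _ hr]
  rw [Measure.smul_apply, Measure.smul_apply, ENNReal.smul_def, ENNReal.smul_def,
    smul_eq_mul, smul_eq_mul, ENNReal.toReal_mul, ENNReal.toReal_mul,
    ENNReal.coe_toReal, Real.coe_toNNReal _ hr]
  ring

/-- An elementary inner-product identity. -/
lemma blasso_inner_identity {E : Type*} [NormedAddCommGroup E] [InnerProductSpace ℝ E]
    (a b y y' : E) :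
    ⟪a - y, b - a⟫_ℝ + ⟪b - y', a - b⟫_ℝ = ⟪y - y', a - b⟫_ℝ - ‖a - b‖ ^ 2 := by
  have hn : ‖a - b‖ ^ 2 = ‖a‖ ^ 2 - 2 * ⟪a, b⟫_ℝ + ‖b‖ ^ 2 := norm_sub_sq_real a b
  simp only [inner_sub_left, inner_sub_right, real_inner_self_eq_norm_sq] at *
  have c1 := real_inner_comm a b
  have c2 := real_inner_comm a y
  have c3 := real_inner_comm a y'
  have c4 := real_inner_comm b y
  have c5 := real_inner_comm b y'
  have c6 := real_inner_comm y y'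
  linarith

end Aux

open scoped InnerProductSpace

/-- If `m` minimizes `J_y` and `m'` minimizes `J_{y'}`, then
`‖Φm − Φm'‖₂ ≤ ‖y − y'‖₂`: the Blasso estimator `y ↦ Φ m_y` is 1-Lipschitz. -/
theorem blasso_estimator_nonexpansive {Ω : Type*} [MetricSpace Ω] [CompactSpace Ω]
    [MeasurableSpace Ω] [BorelSpace Ω] {n : ℕ}
    (φ : Ω → EuclideanSpace ℝ (Fin n)) (hφ : Continuous φ)
    (lam : ℝ) (hlam : 0 < lam)
    (y y' : EuclideanSpace ℝ (Fin n)) (m m' : SignedMeasure Ω)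
    (hm : ∀ μ : SignedMeasure Ω, blassoObj φ lam y m ≤ blassoObj φ lam y μ)
    (hm' : ∀ μ : SignedMeasure Ω, blassoObj φ lam y' m' ≤ blassoObj φ lam y' μ) :
    ‖blassoPhi φ m - blassoPhi φ m'‖ ≤ ‖y - y'‖ := by
  set a := blassoPhi φ m with ha
  set b := blassoPhi φ m' with hb
  set T : ℝ := (m.totalVariation Set.univ).toReal with hT
  set T' : ℝ := (m'.totalVariation Set.univ).toReal with hT'
  -- The key variational inequality, for one minimizer.
  have step : ∀ (z : EuclideanSpace ℝ (Fin n)) (μ μ' : SignedMeasure Ω),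
      (∀ ν : SignedMeasure Ω, blassoObj φ lam z μ ≤ blassoObj φ lam z ν) →
      ∀ t : ℝ, 0 < t → t ≤ 1 →
      0 ≤ t * ⟪blassoPhi φ μ - z, blassoPhi φ μ' - blassoPhi φ μ⟫_ℝ +
        t ^ 2 / 2 * ‖blassoPhi φ μ' - blassoPhi φ μ‖ ^ 2 +
        lam * t * ((μ'.totalVariation Set.univ).toReal - (μ.totalVariation Set.univ).toReal) := by
    intro z μ μ' hmin t ht ht1
    have h1 := hmin (μ + t • (μ' - μ))
    set c := blassoPhi φ μ with hc
    set d := blassoPhi φ μ' with hd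
    set S : ℝ := (μ.totalVariation Set.univ).toReal
    set S' : ℝ := (μ'.totalVariation Set.univ).toReal
    have hPhi : blassoPhi φ (μ + t • (μ' - μ)) = c + t • (d - c) := by
      rw [blassoPhi_add hφ, blassoPhi_smul _ ht.le, blassoPhi_sub hφ, hc, hd]
    have hTVle : ((μ + t • (μ' - μ)).totalVariation Set.univ).toReal ≤
        (1 - t) * S + t * S' := by
      have hrw : μ + t • (μ' - μ) = (1 - t) • μ + t • μ' := by module
      rw [hrw]
      refine le_trans (blasso_tv_add_le _ _) ?_
      rw [blasso_tv_smul _ (by linarith : (0:ℝ) ≤ 1 - t), blasso_tv_smul _ ht.le]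
    have hnorm : ‖c + t • (d - c) - z‖ ^ 2 =
        ‖c - z‖ ^ 2 + 2 * (t * ⟪c - z, d - c⟫_ℝ) + t ^ 2 * ‖d - c‖ ^ 2 := by
      have : c + t • (d - c) - z = (c - z) + t • (d - c) := by abel
      rw [this, norm_add_sq_real, real_inner_smul_right, norm_smul,
        Real.norm_eq_abs, abs_of_nonneg ht.le, mul_pow]
    rw [blassoObj, blassoObj, hPhi, hnorm, ← hc] at h1
    have h2 : lam * ((μ + t • (μ' - μ)).totalVariation Set.univ).toReal ≤
        lam * ((1 - t) * S + t * S') := by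
      exact mul_le_mul_of_nonneg_left hTVle hlam.le
    nlinarith [h1, h2]
  have key : ∀ t : ℝ, 0 < t → t ≤ 1 →
      ‖a - b‖ ^ 2 ≤ ⟪y - y', a - b⟫_ℝ + t * ‖a - b‖ ^ 2 := by
    intro t ht ht1
    have s1 := step y m m' hm t ht ht1
    have s2 := step y' m' m hm' t ht ht1
    rw [← ha, ← hb, ← hT, ← hT'] at s1 s2
    have hid := blasso_inner_identity a b y y'
    have hnn : ‖b - a‖ = ‖a - b‖ := norm_sub_rev b a
    rw [hnn] at s1
    -- divide the sum of s1 and s2 by t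
    nlinarith [s1, s2, ht, hid]
  have hsq : ‖a - b‖ ^ 2 ≤ ⟪y - y', a - b⟫_ℝ := by
    refine le_of_forall_pos_le_add fun ε hε => ?_
    have htpos : 0 < min 1 (ε / (‖a - b‖ ^ 2 + 1)) := by
      have : 0 < ‖a - b‖ ^ 2 + 1 := by positivity
      exact lt_min one_pos (div_pos hε this)
    have := key _ htpos (min_le_left _ _)
    have hle : min 1 (ε / (‖a - b‖ ^ 2 + 1)) * ‖a - b‖ ^ 2 ≤ ε := by
      have h1 : min 1 (ε / (‖a - b‖ ^ 2 + 1)) ≤ ε / (‖a - b‖ ^ 2 + 1) := min_le_right _ _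
      have h2 : 0 < ‖a - b‖ ^ 2 + 1 := by positivity
      have h3 : min 1 (ε / (‖a - b‖ ^ 2 + 1)) * ‖a - b‖ ^ 2 ≤
          (ε / (‖a - b‖ ^ 2 + 1)) * (‖a - b‖ ^ 2 + 1) := by
        have := sq_nonneg ‖a - b‖
        nlinarith
      rw [div_mul_cancel₀ _ h2.ne'] at h3
      exact h3
    linarith
  have hinner : ⟪y - y', a - b⟫_ℝ ≤ ‖y - y'‖ * ‖a - b‖ := real_inner_le_norm _ _
  rcases eq_or_lt_of_le (norm_nonneg (a - b)) with h0 | h0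
  · rw [← h0]; exact norm_nonneg _
  · have : ‖a - b‖ * ‖a - b‖ ≤ ‖y - y'‖ * ‖a - b‖ := by nlinarith
    exact le_of_mul_le_mul_right this h0
end

section
/- Let n, k ∈ ℕ with 1 ≤ k ≤ n and let u_1, …, u_k ∈ ℂ be pairwise distinct and nonzero. If c, d ∈ ℂ^k satisfy Σ_{j=1}^k (c_j + d_j ℓ) u_j^ℓ = 0 for every integer ℓ with −n ≤ ℓ ≤ n, then c = 0 and d = 0. Equivalently, the (2n+1) × 2k complex matrix whose 2k columns are (u_j^ℓ)_{ℓ=−n}^{n} and (ℓ u_j^ℓ)_{ℓ=−n}^{n}, for j = 1, …, k, has rank 2k (trivial kernel). (This is the full-rank statement of Appendix C, proving that for 1-D Fourier sampling the matrix Γ_X = [Φ_X, Φ_X^{(1)}] is always injective for k ≤ f_c distinct positions.) -/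
open Polynomial Finset

private lemma sum_poly_eval_aux {k M : ℕ} (u Cc Dd : Fin k → ℂ)
    (h : ∀ m : ℕ, m < M → ∑ j, (Cc j + Dd j * m) * u j ^ m = 0)
    (p : Polynomial ℂ) (hp : p.natDegree < M) :
    ∑ j, (Cc j * p.eval (u j) + Dd j * (u j * p.derivative.eval (u j))) = 0 := by
  have e1 : ∀ x : ℂ, p.eval x = ∑ m ∈ range M, p.coeff m * x ^ m := fun x =>
    eval_eq_sum_range' hp x
  have e2 : ∀ x : ℂ, x * p.derivative.eval x = ∑ m ∈ range M, p.coeff m * m * x ^ m := by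
    intro x
    have hd : p.derivative.natDegree < M :=
      lt_of_le_of_lt ((natDegree_derivative_le p).trans (Nat.sub_le _ _)) hp
    rw [eval_eq_sum_range' hd, Finset.mul_sum]
    have step : ∀ m ∈ range M,
        x * (p.derivative.coeff m * x ^ m) = p.coeff (m+1) * (m+1) * x^(m+1) := by
      intro m _
      rw [Polynomial.coeff_derivative]
      ring
    rw [Finset.sum_congr rfl step]
    have h2 : ∑ m ∈ range (M+1), p.coeff m * m * x ^ m
        = ∑ m ∈ range M, p.coeff (m+1) * (m+1) * x^(m+1) := by
      rw [Finset.sum_range_succ']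
      push_cast
      simp
    rw [← h2, Finset.sum_range_succ, Polynomial.coeff_eq_zero_of_natDegree_lt hp]
    simp
  calc ∑ j, (Cc j * p.eval (u j) + Dd j * (u j * p.derivative.eval (u j)))
      = ∑ j, ∑ m ∈ range M, p.coeff m * ((Cc j + Dd j * m) * u j ^ m) := by
        refine Finset.sum_congr rfl fun j _ => ?_
        rw [e1, e2, Finset.mul_sum, Finset.mul_sum, ← Finset.sum_add_distrib]
        exact Finset.sum_congr rfl fun m _ => by ring
    _ = ∑ m ∈ range M, p.coeff m * ∑ j, (Cc j + Dd j * m) * u j ^ m := by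
        rw [Finset.sum_comm]
        exact Finset.sum_congr rfl fun m _ => by rw [Finset.mul_sum]
    _ = 0 := Finset.sum_eq_zero fun m hm => by rw [h m (mem_range.mp hm), mul_zero]

private lemma deriv_sq_factor (a : ℂ) (s : Polynomial ℂ) :
    (((X - C a)^2 * s).derivative).eval a = 0 := by
  simp [derivative_mul, derivative_pow]

/-- Let `1 ≤ k ≤ n` and let `u₁, …, u_k ∈ ℂ` be pairwise distinct and
nonzero. If `c, d ∈ ℂ^k` satisfy `∑_j (c_j + d_j ℓ) u_j^ℓ = 0` for every integer
`−n ≤ ℓ ≤ n`, then `c = 0` and `d = 0`; i.e. the `(2n+1) × 2k` matrix with columns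
`(u_j^ℓ)_ℓ` and `(ℓ u_j^ℓ)_ℓ` has trivial kernel. -/
theorem fourier_confluent_vandermonde_injective {n k : ℕ} (hk : 1 ≤ k) (hkn : k ≤ n)
    (u : Fin k → ℂ) (hinj : Function.Injective u) (hne : ∀ j, u j ≠ 0)
    (c d : Fin k → ℂ)
    (h : ∀ ℓ : ℤ, -(n : ℤ) ≤ ℓ → ℓ ≤ (n : ℤ) →
      ∑ j, (c j + d j * (ℓ : ℂ)) * u j ^ ℓ = 0) :
    c = 0 ∧ d = 0 := by
  set Cc : Fin k → ℂ := fun j => (c j - d j * n) * u j ^ (-(n:ℤ)) with hCc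
  set Dd : Fin k → ℂ := fun j => d j * u j ^ (-(n:ℤ)) with hDd
  have h' : ∀ m : ℕ, m < 2*n+1 → ∑ j, (Cc j + Dd j * m) * u j ^ m = 0 := by
    intro m hm
    have hb1 : -(n:ℤ) ≤ (m:ℤ) - n := by omega
    have hb2 : (m:ℤ) - n ≤ (n:ℤ) := by omega
    have h0 := h ((m:ℤ) - n) hb1 hb2
    rw [← h0]
    refine Finset.sum_congr rfl fun j _ => ?_
    have hz : u j ^ ((m:ℤ) - (n:ℤ)) = u j ^ m * u j ^ (-(n:ℤ)) := by
      rw [sub_eq_add_neg, zpow_add₀ (hne j), zpow_natCast]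
    rw [hz]
    push_cast
    ring
  -- the auxiliary polynomials
  set q : Fin k → Polynomial ℂ := fun i => ∏ t ∈ Finset.univ.erase i, (X - C (u t))^2 with hq
  have hqdeg : ∀ i, (q i).natDegree ≤ 2*(k-1) := by
    intro i
    refine (Polynomial.natDegree_prod_le _ _).trans ?_
    have : ∀ t ∈ Finset.univ.erase i, ((X - C (u t))^2).natDegree = 2 := by
      intro t _
      rw [Polynomial.natDegree_pow, Polynomial.natDegree_X_sub_C]
    rw [Finset.sum_congr rfl this, Finset.sum_const, Finset.card_erase_of_mem (Finset.mem_univ i),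
      Finset.card_univ, Fintype.card_fin, smul_eq_mul]
    omega
  have hqeval : ∀ i j, j ≠ i → (q i).eval (u j) = 0 := by
    intro i j hji
    rw [hq]
    simp only [Polynomial.eval_prod]
    refine Finset.prod_eq_zero (Finset.mem_erase.mpr ⟨hji, Finset.mem_univ j⟩) ?_
    simp
  have hqfac : ∀ i j, j ≠ i → ∃ s, q i = (X - C (u j))^2 * s := by
    intro i j hji
    exact ⟨∏ t ∈ (Finset.univ.erase i).erase j, (X - C (u t))^2,
      (Finset.mul_prod_erase _ _ (Finset.mem_erase.mpr ⟨hji, Finset.mem_univ j⟩)).symm⟩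
  have hqne : ∀ i, (q i).eval (u i) ≠ 0 := by
    intro i
    rw [hq]
    simp only [Polynomial.eval_prod]
    refine Finset.prod_ne_zero_iff.mpr fun t ht => ?_
    have hti : t ≠ i := (Finset.mem_erase.mp ht).1
    have hsub : u i - u t ≠ 0 := sub_ne_zero.mpr fun e => hti (hinj e).symm
    simp only [Polynomial.eval_pow, Polynomial.eval_sub, Polynomial.eval_X, Polynomial.eval_C]
    exact pow_ne_zero _ hsub
  -- Step 1 : d = 0
  have hD : ∀ i, Dd i = 0 := by
    intro i
    set P : Polynomial ℂ := q i * (X - C (u i)) with hP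
    have hPdeg : P.natDegree < 2*n+1 := by
      have h1 := Polynomial.natDegree_mul_le (p := q i) (q := X - C (u i))
      rw [Polynomial.natDegree_X_sub_C] at h1
      have h2 := hqdeg i
      have h3 : P.natDegree ≤ 2*(k-1)+1 := by rw [hP]; omega
      omega
    have hS := sum_poly_eval_aux u Cc Dd h' P hPdeg
    have hred : ∑ j, (Cc j * P.eval (u j) + Dd j * (u j * P.derivative.eval (u j)))
        = Dd i * (u i * (q i).eval (u i)) := by
      rw [Finset.sum_eq_single i]
      · have he : P.eval (u i) = 0 := by rw [hP]; simp
        have hd : P.derivative.eval (u i) = (q i).eval (u i) := by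
          rw [hP, derivative_mul]
          simp
        rw [he, hd, mul_zero, zero_add]
      · intro j _ hji
        obtain ⟨s, hs⟩ := hqfac i j hji
        have he : P.eval (u j) = 0 := by
          rw [hP, Polynomial.eval_mul, hqeval i j hji, zero_mul]
        have hd : P.derivative.eval (u j) = 0 := by
          have : P = (X - C (u j))^2 * (s * (X - C (u i))) := by rw [hP, hs]; ring
          rw [this]
          exact deriv_sq_factor _ _
        rw [he, hd, mul_zero, mul_zero, mul_zero, add_zero]
      · simp
    rw [hred] at hS
    rcases mul_eq_zero.mp hS with h1 | h1
    · exact h1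
    · exact absurd h1 (mul_ne_zero (hne i) (hqne i))
  have hd0 : d = 0 := by
    funext i
    have := hD i
    rw [hDd] at this
    simp only at this
    rcases mul_eq_zero.mp this with h1 | h1
    · exact h1
    · exact absurd h1 (zpow_ne_zero _ (hne i))
  -- Step 2 : c = 0
  have hC : ∀ i, Cc i = 0 := by
    intro i
    have hPdeg : (q i).natDegree < 2*n+1 := by have := hqdeg i; omega
    have hS := sum_poly_eval_aux u Cc Dd h' (q i) hPdeg
    have hDall : ∀ j, Dd j = 0 := hD
    have hred : ∑ j, (Cc j * (q i).eval (u j) + Dd j * (u j * (q i).derivative.eval (u j)))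
        = Cc i * (q i).eval (u i) := by
      rw [Finset.sum_eq_single i]
      · rw [hDall i, zero_mul, add_zero]
      · intro j _ hji
        rw [hDall j, hqeval i j hji, mul_zero, zero_mul, add_zero]
      · simp
    rw [hred] at hS
    rcases mul_eq_zero.mp hS with h1 | h1
    · exact h1
    · exact absurd h1 (hqne i)
  have hc0 : c = 0 := by
    funext i
    have := hC i
    rw [hCc] at this
    simp only at this
    rcases mul_eq_zero.mp this with h1 | h1
    · have : c i = d i * n := by linear_combination h1
      rw [this, show d i = 0 from congrFun hd0 i]
      simp
    · exact absurd h1 (zpow_ne_zero _ (hne i))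
  exact ⟨hc0, hd0⟩
end

section
/- Let Ω be a compact metric space, φ : Ω → ℝ^n continuous, and y ∈ ℝ^n. Then strong duality holds between the positivity-constrained regression problem and its dual: inf { (1/2)‖Φμ − y‖₂² : μ a finite nonnegative Borel measure on Ω } = sup { −(1/2)‖p + y‖₂² + (1/2)‖y‖₂² : p ∈ K }, and the supremum is attained (at the unique point of the closed convex cone K minimizing ‖p + y‖₂). (This is part (i) of Lemma 7.1 of the paper.) -/
open MeasureTheory

open scoped RealInnerProductSpace

/-- `Φ μ = ∫ φ dμ` for a finite nonnegative Borel measure `μ`. -/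
noncomputable def posPhi {Ω : Type*} [MeasurableSpace Ω] {ι : Type*} [Fintype ι]
    (φ : Ω → EuclideanSpace ℝ ι) (μ : Measure Ω) : EuclideanSpace ℝ ι :=
  ∫ x, φ x ∂μ

set_option maxHeartbeats 1000000 in
/-- Strong duality for positivity-constrained regression:
`inf {(1/2)‖Φμ − y‖² : μ ≥ 0 finite} = sup {−(1/2)‖p+y‖² + (1/2)‖y‖² : p ∈ K}`,
where `K = {p : ⟨φ(x), p⟩ ≥ 0 ∀x}`, and the supremum is attained at the unique point of
`K` minimizing `‖p + y‖₂`. -/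
theorem pos_constrained_strong_duality {Ω : Type*} [MetricSpace Ω] [CompactSpace Ω]
    [MeasurableSpace Ω] [BorelSpace Ω] {n : ℕ}
    (φ : Ω → EuclideanSpace ℝ (Fin n)) (hφ : Continuous φ)
    (y : EuclideanSpace ℝ (Fin n))
    (K : Set (EuclideanSpace ℝ (Fin n)))
    (hK : K = {p | ∀ x : Ω, 0 ≤ (inner ℝ (φ x) p : ℝ)}) :
    sInf {c : ℝ | ∃ μ : Measure Ω, IsFiniteMeasure μ ∧ c = (1 / 2) * ‖posPhi φ μ - y‖ ^ 2} =
        sSup {c : ℝ | ∃ p ∈ K, c = -(1 / 2) * ‖p + y‖ ^ 2 + (1 / 2) * ‖y‖ ^ 2} ∧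
      ∃ p ∈ K, (∀ q ∈ K, ‖p + y‖ ≤ ‖q + y‖) ∧
        (∀ p' ∈ K, (∀ q ∈ K, ‖p' + y‖ ≤ ‖q + y‖) → p' = p) ∧
        sSup {c : ℝ | ∃ p' ∈ K, c = -(1 / 2) * ‖p' + y‖ ^ 2 + (1 / 2) * ‖y‖ ^ 2} =
          -(1 / 2) * ‖p + y‖ ^ 2 + (1 / 2) * ‖y‖ ^ 2 := by
  classical
  -- integrability of φ with respect to any finite measure
  have hint : ∀ (μ : Measure Ω), IsFiniteMeasure μ → Integrable φ μ := by
    intro μ hμ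
    exact hφ.integrable_of_hasCompactSupport (HasCompactSupport.of_compactSpace φ)
  -- the primal image cone
  set C0 : Set (EuclideanSpace ℝ (Fin n)) := {z | ∃ μ : Measure Ω, IsFiniteMeasure μ ∧ z = posPhi φ μ} with hC0def
  have hadd : ∀ z ∈ C0, ∀ w ∈ C0, z + w ∈ C0 := by
    rintro z ⟨μ, hμ, rfl⟩ w ⟨ν, hν, rfl⟩
    haveI := hμ; haveI := hν
    exact ⟨μ + ν, inferInstance, (integral_add_measure (hint μ hμ) (hint ν hν)).symm⟩
  have hsmul : ∀ (c : ℝ), 0 < c → ∀ z ∈ C0, c • z ∈ C0 := by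
    rintro c hc z ⟨μ, hμ, rfl⟩
    haveI := hμ
    refine ⟨(ENNReal.ofReal c) • μ, ⟨?_⟩, ?_⟩
    · rw [Measure.smul_apply, smul_eq_mul]
      exact ENNReal.mul_lt_top ENNReal.ofReal_lt_top (measure_lt_top μ _)
    · rw [posPhi, posPhi, integral_smul_measure, ENNReal.toReal_ofReal hc.le]
  have h0C : (0 : EuclideanSpace ℝ (Fin n)) ∈ C0 := ⟨0, inferInstance, (integral_zero_measure φ).symm⟩
  have hrange : ∀ x : Ω, φ x ∈ C0 := fun x =>
    ⟨Measure.dirac x, inferInstance, (integral_dirac' φ x hφ.stronglyMeasurable).symm⟩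
  let Ccone : ConvexCone ℝ (EuclideanSpace ℝ (Fin n)) :=
    { carrier := C0
      smul_mem' := fun c hc x hx => hsmul c hc x hx
      add_mem' := fun x hx y hy => hadd x hx y hy }
  let Cbar : ConvexCone ℝ (EuclideanSpace ℝ (Fin n)) := Ccone.closure
  have hCbar_coe : (Cbar : Set (EuclideanSpace ℝ (Fin n))) = closure C0 := ConvexCone.coe_closure Ccone
  have hCbar_closed : IsClosed (Cbar : Set (EuclideanSpace ℝ (Fin n))) := by rw [hCbar_coe]; exact isClosed_closure
  have hCbar_ne : (Cbar : Set (EuclideanSpace ℝ (Fin n))).Nonempty := ⟨0, by rw [hCbar_coe]; exact subset_closure h0C⟩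
  have hrangeCbar : ∀ x : Ω, φ x ∈ (Cbar : Set (EuclideanSpace ℝ (Fin n))) := fun x => by
    rw [hCbar_coe]; exact subset_closure (hrange x)
  -- K as an inner dual cone
  have hKdual : K = (ProperCone.innerDual (Set.range φ) : Set (EuclideanSpace ℝ (Fin n))) := by
    rw [hK]; ext p
    simp only [Set.mem_setOf_eq, SetLike.mem_coe, ProperCone.mem_innerDual, Set.forall_mem_range]
  have hKclosed : IsClosed K := by rw [hKdual]; exact (ProperCone.innerDual _).isClosed
  have hKconv : Convex ℝ K := by rw [hKdual]; exact (ProperCone.innerDual (Set.range φ)).convex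
  have h0K : (0 : EuclideanSpace ℝ (Fin n)) ∈ K := by
    rw [hK]; intro x; rw [inner_zero_right]
  have hKadd : ∀ a ∈ K, ∀ b ∈ K, a + b ∈ K := by
    rw [hK]; intro a ha b hb x
    rw [inner_add_right]; exact add_nonneg (ha x) (hb x)
  -- projection of -y onto K
  obtain ⟨p, hpK, hinf⟩ :=
    exists_norm_eq_iInf_of_complete_convex ⟨0, h0K⟩ hKclosed.isComplete hKconv (-y)
  have hvar : ∀ w ∈ K, ⟪-y - p, w - p⟫ ≤ 0 :=
    (norm_eq_iInf_iff_real_inner_le_zero hKconv hpK).1 hinf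
  have hneg : (-y) - p = -(p + y) := by abel
  -- orthogonality ⟪p+y, p⟫ = 0
  have horth : ⟪p + y, p⟫ = 0 := by
    have h1 := hvar (p + p) (hKadd p hpK p hpK)
    have h2 := hvar 0 h0K
    rw [show p + p - p = p by abel, hneg, inner_neg_left] at h1
    rw [show (0 : EuclideanSpace ℝ (Fin n)) - p = -p by abel, hneg, inner_neg_left, inner_neg_right] at h2
    linarith
  -- ∀ q ∈ K, 0 ≤ ⟪q, p + y⟫
  have hq : ∀ q ∈ K, 0 ≤ ⟪q, p + y⟫ := by
    intro q hqK
    have h1 := hvar (p + q) (hKadd p hpK q hqK)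
    rw [show p + q - p = q by abel, hneg, inner_neg_left] at h1
    rw [real_inner_comm]; linarith
  -- minimality
  have hmin2 : ∀ q ∈ K, ‖p + y‖ ^ 2 ≤ ‖q + y‖ ^ 2 := by
    intro q hqK
    have h1 := hvar q hqK
    rw [hneg, inner_neg_left] at h1
    have hexp : ‖q + y‖ ^ 2 = ‖p + y‖ ^ 2 + 2 * ⟪p + y, q - p⟫ + ‖q - p‖ ^ 2 := by
      rw [show q + y = (p + y) + (q - p) by abel, norm_add_sq_real]
    nlinarith [sq_nonneg ‖q - p‖]
  have hmin : ∀ q ∈ K, ‖p + y‖ ≤ ‖q + y‖ := by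
    intro q hqK
    nlinarith [hmin2 q hqK, norm_nonneg (p + y), norm_nonneg (q + y)]
  -- uniqueness of minimizer
  have huniq : ∀ p' ∈ K, (∀ q ∈ K, ‖p' + y‖ ≤ ‖q + y‖) → p' = p := by
    intro p' hp' hmin'
    haveI : Nonempty K := ⟨⟨p, hpK⟩⟩
    have hnorm : ∀ w : EuclideanSpace ℝ (Fin n), ‖-y - w‖ = ‖w + y‖ := fun w => by
      rw [show -y - w = -(w + y) by abel, norm_neg]
    have hinf' : ‖-y - p'‖ = ⨅ w : K, ‖-y - (w : EuclideanSpace ℝ (Fin n))‖ := by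
      have hbdd : BddBelow (Set.range fun w : K => ‖-y - (w : EuclideanSpace ℝ (Fin n))‖) := by
        refine ⟨0, ?_⟩
        rintro _ ⟨w, rfl⟩
        exact norm_nonneg _
      refine le_antisymm ?_ (ciInf_le hbdd ⟨p', hp'⟩)
      refine le_ciInf ?_
      rintro ⟨w, hw⟩
      rw [hnorm p', hnorm w]
      exact hmin' w hw
    have hvar' := (norm_eq_iInf_iff_real_inner_le_zero hKconv hp').1 hinf'
    have h1 := hvar p' hp'
    have h2 := hvar' p hpK
    have h3 : ⟪p' - p, p' - p⟫ ≤ 0 := by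
      have h4 : ((-y) - p) - ((-y) - p') = p' - p := by abel
      have h5 : ⟪((-y) - p) - ((-y) - p'), p' - p⟫ ≤ 0 := by
        have h6 : ⟪-y - p', p' - p⟫ = -⟪-y - p', p - p'⟫ := by
          rw [show p' - p = -(p - p') by abel, inner_neg_right]
        rw [inner_sub_left, h6]
        linarith
      rwa [h4] at h5
    exact sub_eq_zero.1 (real_inner_self_nonpos.1 h3)
  -- the bipolar argument: p + y ∈ closure C0
  have hstep1 : ((ProperCone.innerDual (Cbar : Set (EuclideanSpace ℝ (Fin n)))) : Set (EuclideanSpace ℝ (Fin n))) ⊆ K := by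
    intro q hq'
    rw [hK]; intro x
    exact hq' (hrangeCbar x)
  have hpt : Cbar.Pointed := ConvexCone.Pointed.of_nonempty_of_isClosed hCbar_ne hCbar_closed
  let PC : ProperCone ℝ (EuclideanSpace ℝ (Fin n)) :=
    { toSubmodule := Cbar.toPointedCone hpt, isClosed' := hCbar_closed }
  have hbipolar := ProperCone.innerDual_innerDual PC
  have hstep2 : (ProperCone.innerDual K : Set (EuclideanSpace ℝ (Fin n))) ⊆ (Cbar : Set (EuclideanSpace ℝ (Fin n))) := by
    intro v hv
    have hv' : v ∈ ProperCone.innerDual K := hv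
    have h : v ∈ ProperCone.innerDual (ProperCone.innerDual (PC : Set (EuclideanSpace ℝ (Fin n))) :
        Set (EuclideanSpace ℝ (Fin n))) := by
      rw [ProperCone.mem_innerDual]
      intro w hw
      exact ProperCone.mem_innerDual.1 hv' (hstep1 hw)
    rw [hbipolar] at h
    exact h
  have hpyC : p + y ∈ closure C0 := by
    rw [← hCbar_coe]
    exact hstep2 (ProperCone.mem_innerDual.2 hq)
  -- value
  set v : ℝ := -(1 / 2) * ‖p + y‖ ^ 2 + (1 / 2) * ‖y‖ ^ 2 with hvdef
  have hy2 : ‖y‖ ^ 2 = ‖p + y‖ ^ 2 + ‖p‖ ^ 2 := by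
    have h0 : (p + y) - p = y := by abel
    calc ‖y‖ ^ 2 = ‖(p + y) - p‖ ^ 2 := by rw [h0]
      _ = ‖p + y‖ ^ 2 - 2 * ⟪p + y, p⟫ + ‖p‖ ^ 2 := norm_sub_sq_real _ _
      _ = ‖p + y‖ ^ 2 + ‖p‖ ^ 2 := by rw [horth]; ring
  have hveq : v = (1 / 2) * ‖p‖ ^ 2 := by rw [hvdef, hy2]; ring
  -- the primal and dual value sets
  set P : Set ℝ := {c : ℝ | ∃ μ : Measure Ω, IsFiniteMeasure μ ∧ c = (1 / 2) * ‖posPhi φ μ - y‖ ^ 2}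
    with hPdef
  set D : Set ℝ := {c : ℝ | ∃ p' ∈ K, c = -(1 / 2) * ‖p' + y‖ ^ 2 + (1 / 2) * ‖y‖ ^ 2} with hDdef
  -- weak duality: v is a lower bound for P
  have hpK' : ∀ x : Ω, 0 ≤ ⟪φ x, p⟫ := by
    have := hpK; rw [hK] at this; exact this
  have hlb : ∀ c ∈ P, v ≤ c := by
    rintro c ⟨μ, hμ, rfl⟩
    haveI := hμ
    set z := posPhi φ μ with hzdef
    have hzp : 0 ≤ ⟪z, p⟫ := by
      have h1 : ∫ x, ⟪p, φ x⟫ ∂μ = ⟪p, z⟫ := integral_inner (hint μ hμ) p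
      have h2 : 0 ≤ ∫ x, ⟪p, φ x⟫ ∂μ :=
        integral_nonneg fun x => by rw [real_inner_comm]; exact hpK' x
      rw [real_inner_comm]; linarith [h1 ▸ h2]
    have hzexp : ‖z - (p + y)‖ ^ 2 = ‖z‖ ^ 2 - 2 * (⟪z, p⟫ + ⟪z, y⟫) + ‖p + y‖ ^ 2 := by
      rw [norm_sub_sq_real, inner_add_right]
    have hz0 : 0 ≤ ‖z - (p + y)‖ ^ 2 := sq_nonneg _
    have hzy : ‖z - y‖ ^ 2 = ‖z‖ ^ 2 - 2 * ⟪z, y⟫ + ‖y‖ ^ 2 := norm_sub_sq_real _ _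
    rw [hvdef]
    linarith
  have hPne : P.Nonempty := ⟨(1 / 2) * ‖posPhi φ (0 : Measure Ω) - y‖ ^ 2, 0, inferInstance, rfl⟩
  have hPbdd : BddBelow P := ⟨v, hlb⟩
  -- sInf P ≤ v
  have hub : sInf P ≤ v := by
    refine le_of_forall_pos_le_add fun ε hε => ?_
    set δ : ℝ := min 1 (ε / (‖p‖ + 1)) with hδdef
    have hppos : (0 : ℝ) < ‖p‖ + 1 := by positivity
    have hδpos : 0 < δ := lt_min one_pos (div_pos hε hppos)
    obtain ⟨z0, hz0C, hz0d⟩ := Metric.mem_closure_iff.1 hpyC δ hδpos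
    have hd : ‖z0 - y‖ ≤ ‖p‖ + δ := by
      have heq : (z0 - (p + y)) + p = z0 - y := by abel
      calc ‖z0 - y‖ = ‖(z0 - (p + y)) + p‖ := by rw [heq]
        _ ≤ ‖z0 - (p + y)‖ + ‖p‖ := norm_add_le _ _
        _ ≤ δ + ‖p‖ := by
            have h1 : ‖z0 - (p + y)‖ = dist (p + y) z0 := by
              rw [dist_comm, dist_eq_norm]
            rw [h1]; linarith [hz0d]
        _ = ‖p‖ + δ := add_comm _ _
    have hmem : (1 / 2) * ‖z0 - y‖ ^ 2 ∈ P := by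
      obtain ⟨μ, hμ, rfl⟩ := hz0C; exact ⟨μ, hμ, rfl⟩
    have hδ1 : δ ≤ 1 := min_le_left _ _
    have hδε : δ * (‖p‖ + 1) ≤ ε := by
      have h2 : δ ≤ ε / (‖p‖ + 1) := min_le_right _ _
      calc δ * (‖p‖ + 1) ≤ (ε / (‖p‖ + 1)) * (‖p‖ + 1) := by nlinarith
        _ = ε := div_mul_cancel₀ _ (ne_of_gt hppos)
    have hle : (1 / 2) * ‖z0 - y‖ ^ 2 ≤ v + ε := by
      have h1 : ‖z0 - y‖ ^ 2 ≤ (‖p‖ + δ) ^ 2 := by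
        nlinarith [norm_nonneg (z0 - y), norm_nonneg p]
      rw [hveq]
      nlinarith [norm_nonneg p]
    calc sInf P ≤ (1 / 2) * ‖z0 - y‖ ^ 2 := csInf_le hPbdd hmem
      _ ≤ v + ε := hle
  have hInfP : sInf P = v := le_antisymm hub (le_csInf hPne hlb)
  -- sSup D = v
  have hgreat : IsGreatest D v := by
    constructor
    · exact ⟨p, hpK, rfl⟩
    · rintro c ⟨q, hqK, rfl⟩
      have := hmin2 q hqK
      linarith
  have hSupD : sSup D = v := hgreat.csSup_eq
  refine ⟨by rw [hInfP, hSupD], p, hpK, hmin, huniq, by rw [hSupD]⟩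
end

section
/- Let Ω be a compact metric space, φ : Ω → ℝ^n continuous, and y ∈ ℝ^n. Suppose m is a finite nonnegative Borel measure minimizing E(μ) := (1/2)‖Φμ − y‖₂² over all finite nonnegative Borel measures on Ω, and suppose p ∈ K minimizes ‖p + y‖₂ over K. Then p = Φm − y, and m({x ∈ Ω : ⟨φ(x), p⟩ ≠ 0}) = 0; that is, the support of m is contained in the set {x ∈ Ω : ⟨φ(x), p⟩ = 0} where the dual certificate Φ*p vanishes. (This is part (ii) of Lemma 7.1 of the paper.) -/
open MeasureTheory

set_option maxHeartbeats 1000000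

/-- If `m` minimizes `E(μ) = (1/2)‖Φμ − y‖²` over finite nonnegative
Borel measures and `p` minimizes `‖p + y‖₂` over `K = {p : ⟨φ(x), p⟩ ≥ 0 ∀x}`, then
`p = Φm − y` and `m` vanishes on the set where the dual certificate `x ↦ ⟨φ(x), p⟩` is
nonzero. -/
theorem pos_constrained_primal_dual_relation {Ω : Type*} [MetricSpace Ω] [CompactSpace Ω]
    [MeasurableSpace Ω] [BorelSpace Ω] {n : ℕ}
    (φ : Ω → EuclideanSpace ℝ (Fin n)) (hφ : Continuous φ)
    (y : EuclideanSpace ℝ (Fin n))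
    (m : Measure Ω) [IsFiniteMeasure m]
    (hm : ∀ μ : Measure Ω, IsFiniteMeasure μ →
      (1 / 2) * ‖posPhi φ m - y‖ ^ 2 ≤ (1 / 2) * ‖posPhi φ μ - y‖ ^ 2)
    (p : EuclideanSpace ℝ (Fin n))
    (hpK : ∀ x : Ω, 0 ≤ (inner ℝ (φ x) p : ℝ))
    (hpmin : ∀ q : EuclideanSpace ℝ (Fin n), (∀ x : Ω, 0 ≤ (inner ℝ (φ x) q : ℝ)) →
      ‖p + y‖ ≤ ‖q + y‖) :
    p = posPhi φ m - y ∧ m {x : Ω | (inner ℝ (φ x) p : ℝ) ≠ 0} = 0 := by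
  unfold posPhi at hm ⊢
  have hcs : HasCompactSupport φ := (isClosed_tsupport φ).isCompact
  have hint : Integrable φ m := hφ.integrable_of_hasCompactSupport hcs
  set Φm : EuclideanSpace ℝ (Fin n) := ∫ x, φ x ∂m with hΦm
  set r : EuclideanSpace ℝ (Fin n) := Φm - y with hr
  clear_value Φm r
  have hE : ∀ μ : Measure Ω, IsFiniteMeasure μ → ‖r‖ ^ 2 ≤ ‖(∫ x, φ x ∂μ) - y‖ ^ 2 := by
    intro μ hμ
    nlinarith [hm μ hμ]
  clear hm
  -- Step (a): r ∈ K
  have hrK : ∀ x : Ω, 0 ≤ (inner ℝ (φ x) r : ℝ) := by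
    intro x
    by_contra hc
    push_neg at hc
    obtain ⟨c, hcdef⟩ : ∃ c : ℝ, c = inner ℝ (φ x) r := ⟨_, rfl⟩
    rw [← hcdef] at hc
    have hφx2 : (0:ℝ) < ‖φ x‖ ^ 2 := by
      rcases eq_or_ne (φ x) 0 with h0 | h0
      · rw [hcdef, h0, inner_zero_left] at hc; exact absurd hc (lt_irrefl 0)
      · have := norm_pos_iff.mpr h0
        positivity
    obtain ⟨t, htdef⟩ : ∃ t : ℝ, t = -c / ‖φ x‖ ^ 2 := ⟨_, rfl⟩
    have htpos : 0 < t := htdef ▸ div_pos (by linarith) hφx2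
    have hkey : ∫ z, φ z ∂(m + ENNReal.ofReal t • Measure.dirac x) = Φm + t • φ x := by
      have h1 : Integrable φ (ENNReal.ofReal t • Measure.dirac x) :=
        (hφ.integrable_of_hasCompactSupport hcs).smul_measure ENNReal.ofReal_ne_top
      rw [integral_add_measure hint h1, integral_smul_measure, integral_dirac,
        ENNReal.toReal_ofReal htpos.le, hΦm]
    have hμfin : IsFiniteMeasure (m + ENNReal.ofReal t • Measure.dirac x) := by
      refine ⟨?_⟩
      simp [ENNReal.mul_lt_top, measure_lt_top, ENNReal.ofReal_lt_top]
    have hEs := hE _ hμfin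
    rw [hkey] at hEs
    have hexp : Φm + t • φ x - y = r + t • φ x := by rw [hr]; abel
    have h5 : ‖r + t • φ x‖ ^ 2 = ‖r‖ ^ 2 + 2 * (t * c) + t ^ 2 * ‖φ x‖ ^ 2 := by
      rw [norm_add_sq_real, real_inner_smul_right, norm_smul, Real.norm_eq_abs,
        abs_of_pos htpos, hcdef, real_inner_comm]
      ring
    rw [hexp, h5] at hEs
    have ht2 : t * ‖φ x‖ ^ 2 = -c := by rw [htdef]; exact div_mul_cancel₀ _ hφx2.ne'
    nlinarith [hEs, ht2, mul_pos htpos (neg_pos.mpr hc)]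
  -- Step (b): ⟨Φm, r⟩ = 0
  have horth : (inner ℝ Φm r : ℝ) = 0 := by
    by_contra hb
    obtain ⟨a, ha⟩ : ∃ a : ℝ, a = ‖Φm‖ ^ 2 := ⟨_, rfl⟩
    obtain ⟨b, hbdef⟩ : ∃ b : ℝ, b = inner ℝ Φm r := ⟨_, rfl⟩
    rw [← hbdef] at hb
    have habs : 0 < |b| := abs_pos.mpr hb
    have ha0 : 0 ≤ a := ha ▸ sq_nonneg _
    have hd : 0 < a + |b| := by linarith
    obtain ⟨s, hsdef⟩ : ∃ s : ℝ, s = -b / (a + |b|) := ⟨_, rfl⟩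
    have hs3 : s * (a + |b|) = -b := by rw [hsdef]; field_simp
    have hs1 : |s| ≤ 1 := by
      rw [hsdef, abs_div, abs_neg, abs_of_pos hd, div_le_one hd]; linarith
    have hc0 : 0 ≤ 1 + s := by
      rcases abs_le.mp hs1 with ⟨h1, _⟩; linarith
    have hkey : ∫ z, φ z ∂(ENNReal.ofReal (1+s) • m) = (1+s) • Φm := by
      rw [integral_smul_measure, ENNReal.toReal_ofReal hc0, hΦm]
    have hμfin : IsFiniteMeasure (ENNReal.ofReal (1+s) • m) := by
      refine ⟨?_⟩
      simp [ENNReal.mul_lt_top, measure_lt_top, ENNReal.ofReal_lt_top]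
    have hEs := hE _ hμfin
    rw [hkey] at hEs
    have hexp : (1+s) • Φm - y = r + s • Φm := by
      rw [hr, add_smul, one_smul]; abel
    have h5 : ‖r + s • Φm‖ ^ 2 = ‖r‖ ^ 2 + 2 * (s * b) + s ^ 2 * a := by
      rw [norm_add_sq_real, real_inner_smul_right, norm_smul, Real.norm_eq_abs,
        hbdef, real_inner_comm, ha]
      try rw [mul_pow, sq_abs]
      try ring
    rw [hexp, h5] at hEs
    have e1 : s ^ 2 * (a + |b|) = -(s * b) := by linear_combination s * hs3
    have e2 : (s * b) * (a + |b|) = -b ^ 2 := by linear_combination b * hs3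
    have h4 : 0 ≤ s * b := by
      nlinarith [hEs, e1, mul_nonneg (sq_nonneg s) (abs_nonneg b)]
    nlinarith [e2, mul_nonneg h4 hd.le, mul_pos habs habs, sq_abs b]
  -- inner ℝ of Φm with q as an integral
  have hΦq : ∀ q : EuclideanSpace ℝ (Fin n),
      (inner ℝ Φm q : ℝ) = ∫ x, (inner ℝ (φ x) q : ℝ) ∂m := by
    intro q
    calc (inner ℝ Φm q : ℝ) = (inner ℝ q Φm : ℝ) := real_inner_comm _ _
      _ = ∫ x, (inner ℝ q (φ x) : ℝ) ∂m := by rw [hΦm]; exact (integral_inner (𝕜 := ℝ) hint q).symm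
      _ = ∫ x, (inner ℝ (φ x) q : ℝ) ∂m := by
          congr 1; funext x; exact real_inner_comm _ _
  have hry : r + y = Φm := by rw [hr]; abel
  have hqp : ∀ q : EuclideanSpace ℝ (Fin n),
      ‖q + y‖ ^ 2 = ‖r + y‖ ^ 2 + 2 * (inner ℝ Φm q : ℝ) + ‖q - r‖ ^ 2 := by
    intro q
    have hsplit : q + y = (r + y) + (q - r) := by abel
    rw [hsplit]
    rw [norm_add_sq_real]
    rw [hry]
    rw [inner_sub_right]
    rw [horth]
    ring
  have h1 : ‖p + y‖ ≤ ‖r + y‖ := hpmin r hrK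
  have h3 : 0 ≤ (inner ℝ Φm p : ℝ) := by
    rw [hΦq p]
    exact integral_nonneg fun x => hpK x
  have hpr : p = r := by
    have h2 := hqp p
    have h4 : ‖p - r‖ ^ 2 ≤ 0 := by
      nlinarith [norm_nonneg (p + y), norm_nonneg (r + y)]
    rw [← sub_eq_zero]
    exact norm_le_zero_iff.mp (by nlinarith [norm_nonneg (p - r)])
  refine ⟨hpr, ?_⟩
  have hintg : Integrable (fun x => (inner ℝ (φ x) p : ℝ)) m := by
    have hcont : Continuous fun x => (inner ℝ (φ x) p : ℝ) :=
      hφ.inner continuous_const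
    exact hcont.integrable_of_hasCompactSupport (isClosed_tsupport _).isCompact
  have hzero : ∫ x, (inner ℝ (φ x) p : ℝ) ∂m = 0 := by
    rw [← hΦq p, hpr, horth]
  have hae := (integral_eq_zero_iff_of_nonneg (fun x => hpK x) hintg).mp hzero
  rw [Filter.EventuallyEq, ae_iff] at hae
  simpa using hae
end
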